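/- arXiv:1403.2942 — 8 statements merged into one kernel-verified Lean document; each statement's English description precedes it below -/
import Mathlib

section
/- Let R = ℤ[x₁, x_p, x_{p²}, …] be a polynomial ring and fix a ∈ ℕ. If z is a p-typical Witt vector over R such that for all n, the p^n-th ghost component of z is a homogeneous polynomial of degree a·p^n under the weighting where x_{p^i} has weight p^i, then the p^n-th Witt component of z is also a homogeneous polynomial of degree a·p^n under the same weighting. -/
open WittVector MvPolynomial

private lemma cancel_C {f : MvPolynomial ℕ ℤ} {c : ℤ} (hc : c ≠ 0) {w : ℕ → ℕ} {d : ℕ}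
    (h : MvPolynomial.IsWeightedHomogeneous w (MvPolynomial.C c * f) d) :
    MvPolynomial.IsWeightedHomogeneous w f d := by
  intro m hm
  apply h
  rw [MvPolynomial.coeff_C_mul]
  exact mul_ne_zero hc hm

private lemma pow_homog {f : MvPolynomial ℕ ℤ} {w : ℕ → ℕ} {d : ℕ}
    (h : MvPolynomial.IsWeightedHomogeneous w f d) (k : ℕ) :
    MvPolynomial.IsWeightedHomogeneous w (f ^ k) (k * d) := by
  induction k with
  | zero => simpa using MvPolynomial.isWeightedHomogeneous_one ℤ w
  | succ k ih =>
    have := ih.mul h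
    rw [pow_succ]
    convert this using 1
    ring

/-- If all ghost components of a Witt vector over `ℤ[x₁, x_p, x_{p²}, …]` are weighted
homogeneous of degree `a·pⁿ` (with `x_{pⁱ}` of weight `pⁱ`), then so are its Witt components. -/
theorem stmt0 (p : ℕ) [Fact p.Prime] (a : ℕ)
    (z : WittVector p (MvPolynomial ℕ ℤ))
    (hghost : ∀ n : ℕ,
      MvPolynomial.IsWeightedHomogeneous (fun i : ℕ => p ^ i)
        (WittVector.ghostComponent n z) (a * p ^ n)) :
    ∀ n : ℕ,
      MvPolynomial.IsWeightedHomogeneous (fun i : ℕ => p ^ i)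
        (z.coeff n) (a * p ^ n) := by
  intro n
  induction n using Nat.strong_induction_on with
  | _ n ih =>
    have hp : (p : ℤ) ≠ 0 := Nat.cast_ne_zero.mpr (Fact.out (p := p.Prime)).ne_zero
    have key : (MvPolynomial.C ((p : ℤ) ^ n) : MvPolynomial ℕ ℤ) * z.coeff n =
        WittVector.ghostComponent n z -
          ∑ i ∈ Finset.range n, (p : MvPolynomial ℕ ℤ) ^ i * z.coeff i ^ p ^ (n - i) := by
      rw [WittVector.ghostComponent_apply, aeval_wittPolynomial, Finset.sum_range_succ]
      ring_nf
      simp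
      ring
    have hsum : MvPolynomial.IsWeightedHomogeneous (fun i : ℕ => p ^ i)
        (∑ i ∈ Finset.range n, (p : MvPolynomial ℕ ℤ) ^ i * z.coeff i ^ p ^ (n - i))
        (a * p ^ n) := by
      apply MvPolynomial.IsWeightedHomogeneous.sum
      intro i hi
      rw [Finset.mem_range] at hi
      have h1 : ((p : MvPolynomial ℕ ℤ) ^ i) = MvPolynomial.C ((p : ℤ) ^ i) := by
        rw [map_pow, MvPolynomial.C_eq_coe_nat]
      have h2 := (pow_homog (ih i hi) (p ^ (n - i)))
      have h3 : p ^ (n - i) * (a * p ^ i) = a * p ^ n := by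
        rw [mul_comm, mul_assoc, ← pow_add]
        congr 2
        omega
      rw [h3] at h2
      rw [h1]
      simpa using (MvPolynomial.isWeightedHomogeneous_C (fun i : ℕ => p ^ i) ((p:ℤ)^i)).mul h2
    have hsub : MvPolynomial.IsWeightedHomogeneous (fun i : ℕ => p ^ i)
        (WittVector.ghostComponent n z -
          ∑ i ∈ Finset.range n, (p : MvPolynomial ℕ ℤ) ^ i * z.coeff i ^ p ^ (n - i))
        (a * p ^ n) := by
      rw [← MvPolynomial.mem_weightedHomogeneousSubmodule] at hsum ⊢
      exact Submodule.sub_mem _ ((MvPolynomial.mem_weightedHomogeneousSubmodule _ _ _ _).2 (hghost n)) hsum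
    rw [← key] at hsub
    exact cancel_C (pow_ne_zero n hp) hsub
end

section
/- For any ring R and Witt vectors x, y ∈ W(R), the p^i-th component of the product x·y is a universal polynomial which is homogeneous of degree p^i separately in the x-variables and homogeneous of degree p^i in the y-variables, under the weighting where x_{p^j}, y_{p^j} have weight p^j. -/
open WittVector MvPolynomial Finset

section aux

variable {p : ℕ} [hp : Fact p.Prime]

private lemma isWH_pow {σ : Type*} {R : Type*} [CommSemiring R] {w : σ → ℕ}
    {φ : MvPolynomial σ R} {m : ℕ} (hφ : φ.IsWeightedHomogeneous w m) (k : ℕ) :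
    (φ ^ k).IsWeightedHomogeneous w (k * m) := by
  induction k with
  | zero => simpa using isWeightedHomogeneous_one R w
  | succ k ih =>
    rw [pow_succ, Nat.succ_mul]
    exact ih.mul hφ

private lemma isWH_zero_weight {σ : Type*} {R : Type*} [CommSemiring R]
    (φ : MvPolynomial σ R) :
    φ.IsWeightedHomogeneous (fun _ : σ => (0 : ℕ)) 0 := by
  intro d _
  simp [Finsupp.weight_apply]

private lemma isWH_rename {σ τ R : Type*} [CommSemiring R] {w : σ → ℕ} {w' : τ → ℕ}
    {f : σ → τ} (h : ∀ x, w' (f x) = w x) {φ : MvPolynomial σ R} {m : ℕ}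
    (hφ : φ.IsWeightedHomogeneous w m) :
    (rename f φ).IsWeightedHomogeneous w' m := by
  intro d hd
  obtain ⟨u, rfl, hu⟩ := coeff_rename_ne_zero f φ d hd
  rw [← hφ hu]
  classical
  rw [Finsupp.weight_apply, Finsupp.weight_apply, Finsupp.sum_mapDomain_index]
  · exact Finsupp.sum_congr fun a _ => by rw [h]
  · intro a; simp
  · intro a b₁ b₂; rw [add_smul]

private lemma isWH_witt (n : ℕ) :
    (wittPolynomial p ℚ n).IsWeightedHomogeneous (fun j : ℕ => p ^ j) (p ^ n) := by
  rw [wittPolynomial]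
  apply IsWeightedHomogeneous.sum
  intro j hj
  apply isWeightedHomogeneous_monomial
  rw [Finsupp.weight_apply, Finsupp.sum_single_index (by simp), smul_eq_mul,
    ← pow_add, Nat.sub_add_cancel (Nat.lt_succ_iff.mp (mem_range.mp hj))]

private lemma isWH_rat (b : Fin 2) (n : ℕ) :
    (wittStructureRat p (X 0 * X 1 : MvPolynomial (Fin 2) ℚ) n).IsWeightedHomogeneous
      (fun v : Fin 2 × ℕ => if v.1 = b then p ^ v.2 else 0) (p ^ n) := by
  induction n using Nat.strong_induction_on with
  | _ n ih =>
    rw [wittStructureRat_rec]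
    set w : Fin 2 × ℕ → ℕ := fun v => if v.1 = b then p ^ v.2 else 0 with hw
    have hA : (bind₁ (fun c : Fin 2 => rename (Prod.mk c) (wittPolynomial p ℚ n))
        (X 0 * X 1 : MvPolynomial (Fin 2) ℚ)).IsWeightedHomogeneous w (p ^ n) := by
      rw [map_mul, bind₁_X_right, bind₁_X_right]
      have key : ∀ c : Fin 2, (rename (Prod.mk c) (wittPolynomial p ℚ n)).IsWeightedHomogeneous w
          (if c = b then p ^ n else 0) := by
        intro c
        by_cases hc : c = b
        · rw [if_pos hc]
          exact isWH_rename (fun x => by simp [hw, hc]) (isWH_witt n)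
        · rw [if_neg hc]
          exact isWH_rename (fun x => by simp [hw, hc]) (isWH_zero_weight _)
      have := (key 0).mul (key 1)
      fin_cases b <;> simpa using this
    have hS : ∀ j ∈ range n,
        ((C ((p : ℚ) ^ j) * wittStructureRat p (X 0 * X 1 : MvPolynomial (Fin 2) ℚ) j ^ p ^ (n - j))).IsWeightedHomogeneous
          w (p ^ n) := by
      intro j hj
      have := (isWeightedHomogeneous_C w ((p : ℚ) ^ j)).mul
        (isWH_pow (ih j (mem_range.mp hj)) (p ^ (n - j)))
      rwa [zero_add, ← pow_add, Nat.sub_add_cancel (le_of_lt (mem_range.mp hj))] at this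
    have hsub : (bind₁ (fun c : Fin 2 => rename (Prod.mk c) (wittPolynomial p ℚ n))
        (X 0 * X 1 : MvPolynomial (Fin 2) ℚ) -
        ∑ j ∈ range n, C ((p : ℚ) ^ j) * wittStructureRat p (X 0 * X 1 : MvPolynomial (Fin 2) ℚ) j ^ p ^ (n - j)
        ).IsWeightedHomogeneous w (p ^ n) := by
      have h2 : (∑ j ∈ range n, C ((p : ℚ) ^ j) * wittStructureRat p (X 0 * X 1 : MvPolynomial (Fin 2) ℚ) j ^ p ^ (n - j)).IsWeightedHomogeneous w (p ^ n) := IsWeightedHomogeneous.sum _ _ _ hS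
      rw [← mem_weightedHomogeneousSubmodule] at hA h2 ⊢
      exact Submodule.sub_mem _ hA h2
    have := (isWeightedHomogeneous_C w (1 / (p : ℚ) ^ n)).mul hsub
    rwa [zero_add] at this

private lemma isWH_of_map {σ : Type*} {w : σ → ℕ} {φ : MvPolynomial σ ℤ} {m : ℕ}
    (h : (map (Int.castRingHom ℚ) φ).IsWeightedHomogeneous w m) :
    φ.IsWeightedHomogeneous w m := by
  intro d hd
  apply h
  simp only [coeff_map, eq_intCast, ne_eq, Int.cast_eq_zero]
  exact hd

private lemma isWH_wittMul (b : Fin 2) (n : ℕ) :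
    (wittMul p n).IsWeightedHomogeneous
      (fun v : Fin 2 × ℕ => if v.1 = b then p ^ v.2 else 0) (p ^ n) := by
  apply isWH_of_map
  have : map (Int.castRingHom ℚ) (wittMul p n) =
      wittStructureRat p (X 0 * X 1 : MvPolynomial (Fin 2) ℚ) n := by
    rw [wittMul, map_wittStructureInt]
    congr 1
    simp
  rw [this]
  exact isWH_rat b n

end aux

/-- The `pⁱ`-th component of a product of Witt vectors is given by a universal polynomial
over `ℤ` which is weighted homogeneous of degree `pⁱ` separately in the `x`-variables
(indexed by `(0, j)`, of weight `pʲ`) and in the `y`-variables (indexed by `(1, j)`,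
of weight `pʲ`). -/
theorem stmt2 (p : ℕ) [Fact p.Prime] (i : ℕ) :
    ∃ φ : MvPolynomial (Fin 2 × ℕ) ℤ,
      MvPolynomial.IsWeightedHomogeneous
        (fun v : Fin 2 × ℕ => if v.1 = 0 then p ^ v.2 else 0) φ (p ^ i) ∧
      MvPolynomial.IsWeightedHomogeneous
        (fun v : Fin 2 × ℕ => if v.1 = 1 then p ^ v.2 else 0) φ (p ^ i) ∧
      ∀ (R : Type) [CommRing R] (x y : WittVector p R),
        (x * y).coeff i =
          MvPolynomial.aeval
            (fun v : Fin 2 × ℕ => if v.1 = 0 then x.coeff v.2 else y.coeff v.2) φ := by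
  refine ⟨wittMul p i, isWH_wittMul 0 i, isWH_wittMul 1 i, ?_⟩
  intro R _ x y
  rw [WittVector.mul_coeff, WittVector.peval]
  have hfun : (Function.uncurry ![x.coeff, y.coeff]) =
      fun v : Fin 2 × ℕ => if v.1 = 0 then x.coeff v.2 else y.coeff v.2 := by
    funext v
    obtain ⟨b, j⟩ := v
    fin_cases b <;> simp [Function.uncurry]
  rw [hfun]
end

section
/- Let x, y be p-typical Witt vectors over a ring R with F(x) = y, where F is the Witt vector Frobenius. Then for each i ≥ 0, y_{p^i} = x_{p^i}^p + p·x_{p^{i+1}} + p·f_{p^i}(x₁, …, x_{p^i}), where f_{p^i} is a polynomial with integer coefficients not involving the variable x_{p^{i+1}}. -/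
open WittVector MvPolynomial

private lemma auxVars (p : ℕ) [Fact p.Prime] :
    ∀ n : ℕ, (WittVector.frobeniusPolyAux p n).vars ⊆ Finset.range (n + 2) := by
  intro n
  induction n using Nat.strong_induction_on with
  | _ n ih =>
    rw [WittVector.frobeniusPolyAux_eq]
    refine (vars_sub_subset _).trans (Finset.union_subset ?_ ?_)
    · rw [vars_X]
      intro k hk
      simp only [Finset.mem_singleton] at hk
      simp [hk]
    · refine (vars_sum_subset _ _).trans ?_
      intro k hk
      simp only [Finset.mem_biUnion] at hk
      obtain ⟨a, ha, hk⟩ := hk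
      simp only [Finset.mem_range] at ha ⊢
      replace hk := (vars_sum_subset _ _) hk
      simp only [Finset.mem_biUnion] at hk
      obtain ⟨b, _, hk⟩ := hk
      replace hk := (vars_mul _ _).trans (Finset.union_subset_union (vars_mul _ _)
        (by rw [vars_C] : (_ : MvPolynomial ℕ ℤ).vars ⊆ ∅)) hk
      simp only [Finset.mem_union, Finset.notMem_empty, or_false] at hk
      rcases hk with hk | hk
      · replace hk := vars_pow _ _ hk
        replace hk := vars_pow _ _ hk
        rw [vars_X] at hk
        simp only [Finset.mem_singleton] at hk
        omega
      · replace hk := vars_pow _ _ hk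
        have := ih a ha hk
        simp only [Finset.mem_range] at this
        omega

/-- If `F(x) = y` for the Witt vector Frobenius, then
`y_{pⁱ} = x_{pⁱ}^p + p·x_{pⁱ⁺¹} + p·f(x₁, …, x_{pⁱ})` for a universal integer polynomial `f`
in the variables `x₁, …, x_{pⁱ}` only (in particular not involving `x_{pⁱ⁺¹}`). -/
theorem stmt3 (p : ℕ) [Fact p.Prime] (i : ℕ) :
    ∃ f : MvPolynomial (Fin (i + 1)) ℤ,
      ∀ (R : Type) [CommRing R] (x y : WittVector p R),
        WittVector.frobenius x = y →
        y.coeff i = x.coeff i ^ p + p * x.coeff (i + 1) +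
          p * MvPolynomial.aeval (fun j : Fin (i + 1) => x.coeff j) f := by
  classical
  set S : MvPolynomial ℕ ℤ := X (i + 1) - WittVector.frobeniusPolyAux p i with hS
  have hSsum : S = ∑ a ∈ Finset.range i, ∑ j ∈ Finset.range (p ^ (i - a)),
      (X a ^ p) ^ (p ^ (i - a) - (j + 1)) * WittVector.frobeniusPolyAux p a ^ (j + 1) *
        C ↑((p ^ (i - a)).choose (j + 1) / p ^ (i - a - multiplicity p (j + 1)) *
          ↑p ^ (j - multiplicity p (j + 1)) : ℕ) := by
    rw [hS, WittVector.frobeniusPolyAux_eq]; ring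
  have hvars : ↑S.vars ⊆ Set.range (Fin.val : Fin (i + 1) → ℕ) := by
    intro k hk
    have hki : k < i + 1 := by
      rw [hSsum] at hk
      replace hk := (vars_sum_subset _ _) hk
      simp only [Finset.mem_biUnion] at hk
      obtain ⟨a, ha, hk⟩ := hk
      simp only [Finset.mem_range] at ha
      replace hk := (vars_sum_subset _ _) hk
      simp only [Finset.mem_biUnion] at hk
      obtain ⟨b, _, hk⟩ := hk
      replace hk := (vars_mul _ _).trans (Finset.union_subset_union (vars_mul _ _)
        (by rw [vars_C] : (_ : MvPolynomial ℕ ℤ).vars ⊆ ∅)) hk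
      simp only [Finset.mem_union, Finset.notMem_empty, or_false] at hk
      rcases hk with hm | hm
      · replace hm := vars_pow _ _ hm
        replace hm := vars_pow _ _ hm
        rw [vars_X] at hm
        simp only [Finset.mem_singleton] at hm
        omega
      · replace hm := vars_pow _ _ hm
        have := auxVars p a hm
        simp only [Finset.mem_range] at this
        omega
    exact ⟨⟨k, hki⟩, rfl⟩
  obtain ⟨q, hq⟩ := exists_rename_eq_of_vars_subset_range S Fin.val Fin.val_injective hvars
  refine ⟨-q, ?_⟩
  intro R _ x y hxy
  subst hxy
  have hcoeff : (WittVector.frobenius x).coeff i =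
      MvPolynomial.aeval x.coeff (WittVector.frobeniusPoly p i) :=
    WittVector.coeff_frobenius x i
  have hSx : MvPolynomial.aeval (fun j : Fin (i + 1) => x.coeff j) q =
      MvPolynomial.aeval x.coeff S := by
    rw [← hq, aeval_rename]
    rfl
  rw [hcoeff, WittVector.frobeniusPoly]
  have : WittVector.frobeniusPolyAux p i = X (i + 1) - S := by rw [hS]; ring
  rw [this]
  simp only [map_add, map_mul, map_pow, map_sub, map_neg, aeval_X, aeval_C, hSx]
  push_cast
  ring
end

section
/- Let A be a p-torsion-free ring integrally closed in A[1/p] which is Witt-perfect at p, and choose x₁, x₂, … ∈ A with x₁^p ≡ p (mod p²) and x_{n+1}^p ≡ x_n (mod p). Then for all n ≥ 1 and 1 ≤ m ≤ p^n, the set {x ∈ A : x^{p^n} ∈ p^m A} equals the ideal (x_n^m, p)A. -/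
open WittVector

/-- Frobenius `W_{pⁿ⁺¹}(A) → W_{pⁿ}(A)` on finite-length `p`-typical Witt vectors. -/
noncomputable def truncatedFrobenius (p : ℕ) [Fact p.Prime] (A : Type*) [CommRing A] (n : ℕ)
    (x : TruncatedWittVector p (n + 2) A) : TruncatedWittVector p (n + 1) A :=
  WittVector.truncate (n + 1) (WittVector.frobenius x.out)

/-- `A` is Witt-perfect at `p`: all the truncated Frobenius maps are surjective. -/
def IsWittPerfect (p : ℕ) [Fact p.Prime] (A : Type*) [CommRing A] : Prop :=
  ∀ n : ℕ, Function.Surjective (truncatedFrobenius p A n)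

section Helpers

variable {A : Type*} [CommRing A]

private lemma preg' {P : A} (htf : ∀ a : A, P * a = 0 → a = 0) (j : ℕ) :
    ∀ a : A, P ^ j * a = 0 → a = 0 := by
  induction j with
  | zero => intro a h; simpa using h
  | succ j ih => intro a h; exact htf a (ih _ (by linear_combination h))

private lemma pcan {P : A} (htf : ∀ a : A, P * a = 0 → a = 0)
    {a b : A} (h : P * a = P * b) : a = b :=
  sub_eq_zero.mp (htf _ (by linear_combination h))

private lemma pcanj {P : A} (htf : ∀ a : A, P * a = 0 → a = 0) (j : ℕ)
    {a b : A} (h : P ^ j * a = P ^ j * b) : a = b :=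
  sub_eq_zero.mp (preg' htf j _ (by linear_combination h))

private lemma div_ineq {N m k : ℕ} (hN : 0 < N) (hm : m ≤ N) (hk : k ≤ N) :
    m ≤ (N - k) + m * k / N := by
  rcases le_or_gt (m + k) N with h | h
  · exact le_trans (by omega : m ≤ N - k) (Nat.le_add_right _ _)
  · have h2 : m + k - N ≤ m * k / N := by
      rw [Nat.le_div_iff_mul_le hN]
      have hm' : (m : ℤ) ≤ N := by exact_mod_cast hm
      have hk' : (k : ℤ) ≤ N := by exact_mod_cast hk
      zify [h.le]
      nlinarith [mul_nonneg (sub_nonneg.2 hm') (sub_nonneg.2 hk')]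
    calc m = (N - k) + (m + k - N) := by omega
      _ ≤ (N - k) + m * k / N := Nat.add_le_add_left h2 _

private lemma dvd_term {X P u : A} {N m k : ℕ} (hu : X ^ N = P * u)
    (hN : 0 < N) (hm : m ≤ N) (hk : k ≤ N) :
    P ^ m ∣ X ^ (m * k) * P ^ (N - k) := by
  have hq : X ^ (m * k) = (P * u) ^ (m * k / N) * X ^ (m * k % N) := by
    rw [← hu, ← pow_mul, ← pow_add, Nat.div_add_mod]
  have h1 : P ^ m ∣ P ^ (m * k / N + (N - k)) :=
    pow_dvd_pow P (by have := div_ineq hN hm hk; omega)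
  exact h1.trans ⟨u ^ (m * k / N) * X ^ (m * k % N), by rw [hq]; ring⟩

private lemma root_lemma {p : ℕ} (x : ℕ → A)
    (hx1 : x 1 ^ p - (p : A) ∈ Ideal.span {(p : A) ^ 2})
    (hxn : ∀ n : ℕ, 1 ≤ n → x (n + 1) ^ p - x n ∈ Ideal.span {(p : A)}) :
    ∀ n : ℕ, 1 ≤ n → ∃ s : A, x n ^ p ^ n = (p : A) * (1 + (p : A) * s) := by
  intro n hn
  induction n with
  | zero => omega
  | succ n ih =>
    rcases Nat.eq_zero_or_pos n with rfl | hn'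
    · obtain ⟨t, ht⟩ := Ideal.mem_span_singleton.mp hx1
      exact ⟨t, by rw [pow_one]; linear_combination ht⟩
    · obtain ⟨s, hs⟩ := ih hn'
      obtain ⟨t, ht⟩ := Ideal.mem_span_singleton.mp (hxn n hn')
      have hd : ((p : A)) ^ (n + 1) ∣ (x (n + 1) ^ p) ^ p ^ n - x n ^ p ^ n :=
        dvd_sub_pow_of_dvd_sub ⟨t, ht⟩ n
      obtain ⟨c, hc⟩ := (pow_dvd_pow (p : A) (by omega : 2 ≤ n + 1)).trans hd
      refine ⟨s + c, ?_⟩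
      have e1 : x (n + 1) ^ p ^ (n + 1) = (x (n + 1) ^ p) ^ p ^ n := by
        rw [pow_succ', pow_mul]
      rw [e1]; linear_combination hc + hs

private lemma star_lemma {p : ℕ}
    (htf : ∀ a : A, (p : A) * a = 0 → a = 0)
    (hic : ∀ y : Localization.Away (p : A), IsIntegral A y →
      ∃ a : A, algebraMap A (Localization.Away (p : A)) a = y)
    {X u : A} {M : ℕ} (hu : X ^ (M + 1) = (p : A) * u) (hu1 : (p : A) ∣ u - 1) :
    ∀ w : A, (p : A) ∣ w ^ (M + 1) → w ∈ Ideal.span {X, (p : A)} := by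
  intro w hw
  obtain ⟨a, ha⟩ := hw
  obtain ⟨t0, ht0⟩ := hu1
  have hinj : Function.Injective (algebraMap A (Localization.Away (p : A))) := by
    refine IsLocalization.injective (M := Submonoid.powers (p : A)) _ ?_
    intro y hy
    obtain ⟨k, rfl⟩ := hy
    rw [mem_nonZeroDivisors_iff_right]
    intro z hz
    exact preg' htf k z (by linear_combination hz)
  obtain ⟨v, hgp⟩ : ∃ v : Localization.Away (p : A),
      algebraMap A (Localization.Away (p : A)) (p : A) * v = 1 :=
    ⟨_, IsLocalization.Away.mul_invSelf (S := Localization.Away (p : A)) (p : A)⟩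
  have hpow : (w * X ^ M) ^ (M + 1) = (p : A) ^ (M + 1) * (a * u ^ M) := by
    have e : (w * X ^ M) ^ (M + 1) = w ^ (M + 1) * (X ^ (M + 1)) ^ M := by
      rw [mul_pow, ← pow_mul, mul_comm M (M + 1), pow_mul]
    rw [e, ha, hu]; ring
  have hhN : (algebraMap A (Localization.Away (p : A)) (w * X ^ M) * v) ^ (M + 1)
      = algebraMap A (Localization.Away (p : A)) (a * u ^ M) := by
    rw [mul_pow, ← map_pow, hpow, map_mul, map_pow]
    calc algebraMap A (Localization.Away (p : A)) (p : A) ^ (M + 1)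
            * algebraMap A (Localization.Away (p : A)) (a * u ^ M) * v ^ (M + 1)
        = (algebraMap A (Localization.Away (p : A)) (p : A) * v) ^ (M + 1)
            * algebraMap A (Localization.Away (p : A)) (a * u ^ M) := by ring
      _ = _ := by rw [hgp, one_pow, one_mul]
  have hint : IsIntegral A (algebraMap A (Localization.Away (p : A)) (w * X ^ M) * v) := by
    refine ⟨Polynomial.X ^ (M + 1) - Polynomial.C (a * u ^ M),
      Polynomial.monic_X_pow_sub_C _ (Nat.succ_ne_zero M), ?_⟩
    rw [Polynomial.eval₂_sub, Polynomial.eval₂_X_pow, Polynomial.eval₂_C, hhN, sub_self]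
  obtain ⟨c, hc⟩ := hic _ hint
  have key : algebraMap A (Localization.Away (p : A)) ((p : A) * c)
      = algebraMap A (Localization.Away (p : A)) (w * X ^ M) := by
    rw [map_mul, hc]
    calc algebraMap A (Localization.Away (p : A)) (p : A)
            * (algebraMap A (Localization.Away (p : A)) (w * X ^ M) * v)
        = (algebraMap A (Localization.Away (p : A)) (p : A) * v)
            * algebraMap A (Localization.Away (p : A)) (w * X ^ M) := by ring
      _ = _ := by rw [hgp, one_mul]
  have hwx : (p : A) * c = w * X ^ M := hinj key
  have h2 : (p : A) * (w * u) = (p : A) * (c * X) := by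
    linear_combination (-X) * hwx - w * hu
  have h3 : w * u = c * X := pcan htf h2
  rw [Ideal.mem_span_pair]
  exact ⟨c, -(t0 * w), by linear_combination -h3 + w * ht0⟩

end Helpers

/-- For `A` `p`-torsion-free, integrally closed in `A[1/p]`, and Witt-perfect at `p`,
with a sequence `x₁, x₂, …` as in Lemma `sequence of p-power roots`, the set
`{x ∈ A : x^{pⁿ} ∈ pᵐ A}` equals the ideal `(xₙᵐ, p)` for `n ≥ 1`, `1 ≤ m ≤ pⁿ`. -/
theorem stmt4 (p : ℕ) [Fact p.Prime] (A : Type*) [CommRing A]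
    (htf : ∀ a : A, (p : A) * a = 0 → a = 0)
    (hic : ∀ y : Localization.Away (p : A), IsIntegral A y →
      ∃ a : A, algebraMap A (Localization.Away (p : A)) a = y)
    (hwp : IsWittPerfect p A)
    (x : ℕ → A)
    (hx1 : x 1 ^ p - (p : A) ∈ Ideal.span {(p : A) ^ 2})
    (hxn : ∀ n : ℕ, 1 ≤ n → x (n + 1) ^ p - x n ∈ Ideal.span {(p : A)}) :
    ∀ n : ℕ, 1 ≤ n → ∀ m : ℕ, 1 ≤ m → m ≤ p ^ n →
      ∀ z : A, z ^ p ^ n ∈ Ideal.span {(p : A) ^ m} ↔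
        z ∈ Ideal.span {x n ^ m, (p : A)} := by
  intro n hn m hm1 hm2 z
  have hp : 0 < p := (Fact.out : p.Prime).pos
  obtain ⟨u, hu, hu1⟩ : ∃ u : A, x n ^ p ^ n = (p : A) * u ∧ (p : A) ∣ u - 1 := by
    obtain ⟨s, hs⟩ := root_lemma x hx1 hxn n hn
    exact ⟨1 + (p : A) * s, hs, ⟨s, by ring⟩⟩
  have hN : 0 < p ^ n := pow_pos hp n
  obtain ⟨M, hM⟩ : ∃ M, p ^ n = M + 1 := ⟨p ^ n - 1, by omega⟩
  constructor
  · intro hz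
    rw [Ideal.mem_span_singleton] at hz
    have star := star_lemma htf hic (X := x n) (u := u) (M := M)
      (by rw [← hM]; exact hu) hu1
    have claim : ∀ j, j ≤ m → 1 ≤ j → z ∈ Ideal.span {x n ^ j, (p : A)} := by
      intro j
      induction j with
      | zero => omega
      | succ j ih =>
        intro hjm _
        rcases Nat.eq_zero_or_pos j with rfl | hj
        · have h1 : (p : A) ∣ z ^ (M + 1) := by
            rw [← hM]
            exact (dvd_pow_self (p : A) (by omega : m ≠ 0)).trans hz
          simpa using star z h1
        · obtain ⟨α, β, hab⟩ := Ideal.mem_span_pair.mp (ih (by omega) hj)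
          have hjN : j ≤ p ^ n := by omega
          have hterm : ∀ k ∈ Finset.range (p ^ n),
              (p : A) ^ (j + 1) ∣
                (α * x n ^ j) ^ k * (β * (p : A)) ^ (p ^ n - k) * ((p ^ n).choose k : A) := by
            intro k hk
            rw [Finset.mem_range] at hk
            rcases Nat.eq_zero_or_pos k with rfl | hk0
            · simp only [pow_zero, one_mul, Nat.sub_zero, Nat.choose_zero_right,
                Nat.cast_one, mul_one, mul_pow]
              exact dvd_trans (pow_dvd_pow _ (by omega)) (dvd_mul_left _ _)
            · have hc2 : (p : A) ∣ ((p ^ n).choose k : A) := by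
                exact_mod_cast
                  Nat.cast_dvd_cast (α := A)
                    ((Fact.out : p.Prime).dvd_choose_pow (by omega) (by omega))
              obtain ⟨c1, hc1⟩ := dvd_term (X := x n) hu hN hjN (le_of_lt hk)
              obtain ⟨c2, hc2⟩ := hc2
              exact ⟨α ^ k * β ^ (p ^ n - k) * c1 * c2, by
                linear_combination (α ^ k * β ^ (p ^ n - k) * (((p ^ n).choose k : ℕ) : A)) * hc1
                  + (α ^ k * β ^ (p ^ n - k) * (p : A) ^ j * c1) * hc2⟩
          have hsum : (p : A) ^ (j + 1) ∣ z ^ p ^ n - (α * x n ^ j) ^ p ^ n := by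
            have e : z ^ p ^ n =
                (∑ k ∈ Finset.range (p ^ n),
                  (α * x n ^ j) ^ k * (β * (p : A)) ^ (p ^ n - k) * ((p ^ n).choose k : A))
                + (α * x n ^ j) ^ p ^ n := by
              rw [← hab, add_pow, Finset.sum_range_succ]
              simp
            rw [e, add_sub_cancel_right]
            exact Finset.dvd_sum hterm
          have hα : (p : A) ∣ α ^ p ^ n := by
            have hz' : (p : A) ^ (j + 1) ∣ z ^ p ^ n :=
              (pow_dvd_pow _ (by omega : j + 1 ≤ m)).trans hz
            have h1 : (p : A) ^ (j + 1) ∣ (α * x n ^ j) ^ p ^ n := by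
              have := dvd_sub hz' hsum
              simpa using this
            obtain ⟨e, he⟩ := h1
            have e2 : (α * x n ^ j) ^ p ^ n = (p : A) ^ j * (α ^ p ^ n * u ^ j) := by
              have e3 : (α * x n ^ j) ^ p ^ n = α ^ p ^ n * (x n ^ p ^ n) ^ j := by
                rw [mul_pow, ← pow_mul, mul_comm j (p ^ n), pow_mul]
              rw [e3, hu]; ring
            have e4 : α ^ p ^ n * u ^ j = (p : A) * e :=
              pcanj htf j (by rw [← e2, he]; ring)
            obtain ⟨t, ht⟩ : (p : A) ∣ u ^ j - 1 :=
              dvd_trans hu1 (by simpa using sub_dvd_pow_sub_pow u 1 j)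
            exact ⟨e - α ^ p ^ n * t, by linear_combination e4 - α ^ p ^ n * ht⟩
          obtain ⟨γ, δ, hγ⟩ := Ideal.mem_span_pair.mp (star α (by rw [← hM]; exact hα))
          rw [Ideal.mem_span_pair]
          exact ⟨γ, δ * x n ^ j + β, by linear_combination x n ^ j * hγ + hab⟩
    exact claim m le_rfl hm1
  · intro hz
    obtain ⟨α, β, hab⟩ := Ideal.mem_span_pair.mp hz
    rw [Ideal.mem_span_singleton, ← hab, add_pow]
    refine Finset.dvd_sum ?_
    intro k hk
    rw [Finset.mem_range] at hk
    obtain ⟨c1, hc1⟩ := dvd_term (X := x n) hu hN hm2 (by omega : k ≤ p ^ n)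
    exact ⟨α ^ k * β ^ (p ^ n - k) * ((p ^ n).choose k : A) * c1, by
      linear_combination (α ^ k * β ^ (p ^ n - k) * (((p ^ n).choose k : ℕ) : A)) * hc1⟩
end

section
/- Let A be a p-torsion-free ring integrally closed in A[1/p], and let I be the nilradical of A. Then I·A[1/p] = I, I is also the nilradical of A[1/p], the natural map A[1/p]/I → (A/I)[1/p] is bijective, and A/I is p-torsion-free and integrally closed in (A/I)[1/p]. -/
/-- Let `A` be `p`-torsion-free and integrally closed in `A_p := A[1/p]`, and let `I` be the
nilradical of `A`. Then `I·A_p` equals the image of `I` (so "`I·A_p = I`"), it is the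
nilradical of `A_p`, the natural map `A_p/I·A_p → (A/I)_p` is bijective, and `A/I` is
`p`-torsion-free and integrally closed in `(A/I)_p`. -/
theorem stmt6 (p : ℕ) [Fact p.Prime] (A : Type*) [CommRing A]
    (htf : ∀ a : A, (p : A) * a = 0 → a = 0)
    (hic : ∀ y : Localization.Away (p : A), IsIntegral A y →
      ∃ a : A, algebraMap A (Localization.Away (p : A)) a = y) :
    -- notation
    ∀ (Ap : Type _) (_ : CommRing Ap) (_ : Algebra A Ap) (_ : IsLocalization.Away (p : A) Ap)
      (Bp : Type _) (_ : CommRing Bp) (_ : Algebra (A ⧸ nilradical A) Bp)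
      (_ : IsLocalization.Away ((p : A ⧸ nilradical A)) Bp)
      (f : Ap →+* Bp)
      (hf : ∀ a : A, f (algebraMap A Ap a) =
        algebraMap (A ⧸ nilradical A) Bp (Ideal.Quotient.mk (nilradical A) a)),
      -- (1) `I·A_p = I`: every element of the ideal generated by `I` in `A_p` comes from `I`
      (∀ y ∈ Ideal.map (algebraMap A Ap) (nilradical A),
        ∃ x ∈ nilradical A, algebraMap A Ap x = y) ∧
      -- (2) `I·A_p` is the nilradical of `A_p`
      Ideal.map (algebraMap A Ap) (nilradical A) = nilradical Ap ∧
      -- (3) the natural map `A_p/I·A_p → (A/I)_p` is bijective, i.e. `f` is surjective with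
      -- kernel exactly `I·A_p`
      Function.Surjective f ∧
      (∀ y : Ap, f y = 0 ↔ y ∈ Ideal.map (algebraMap A Ap) (nilradical A)) ∧
      -- (4) `A/I` is `p`-torsion-free and integrally closed in `(A/I)_p`
      (∀ a : A ⧸ nilradical A, (p : A ⧸ nilradical A) * a = 0 → a = 0) ∧
      (∀ y : Bp, IsIntegral (A ⧸ nilradical A) y →
        ∃ a : A ⧸ nilradical A, algebraMap (A ⧸ nilradical A) Bp a = y) := by
  intro Ap _ _ _ Bp _ _ _ f hf
  -- powers of p are regular
  have htfpow : ∀ (n : ℕ) (a : A), (p : A) ^ n * a = 0 → a = 0 := by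
    intro n
    induction n with
    | zero => intro a h; simpa using h
    | succ n ih =>
      intro a h
      refine htf a (ih ((p : A) * a) ?_)
      rw [← mul_assoc, ← pow_succ]; exact h
  have hp : (p : A) ∈ nonZeroDivisors A := mem_nonZeroDivisors_iff_right.mpr fun x hx => htf x (by rwa [mul_comm])
  have hle : Submonoid.powers (p : A) ≤ nonZeroDivisors A := by
    rintro x ⟨n, rfl⟩; exact pow_mem hp n
  have hinj : Function.Injective (algebraMap A Ap) := IsLocalization.injective Ap hle
  -- transfer hic to Ap
  have hic' : ∀ y : Ap, IsIntegral A y → ∃ a : A, algebraMap A Ap a = y := by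
    intro y hy
    let e : Localization.Away (p : A) ≃ₐ[A] Ap :=
      IsLocalization.algEquiv (Submonoid.powers (p : A)) _ _
    obtain ⟨a, ha⟩ := hic (e.symm y) (hy.map e.symm.toAlgHom)
    refine ⟨a, ?_⟩
    have := congrArg e ha
    simpa using this
  -- nilpotents of Ap come from nilradical A
  have knil : ∀ y : Ap, IsNilpotent y → ∃ x ∈ nilradical A, algebraMap A Ap x = y := by
    rintro y ⟨n, hn⟩
    have hint : IsIntegral A y := by
      refine ⟨Polynomial.X ^ n, Polynomial.monic_X_pow n, ?_⟩
      simpa using hn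
    obtain ⟨a, ha⟩ := hic' y hint
    refine ⟨a, ⟨n, hinj ?_⟩, ha⟩
    rw [map_pow, ha, hn, map_zero]
  have map_le : Ideal.map (algebraMap A Ap) (nilradical A) ≤ nilradical Ap := by
    rw [Ideal.map_le_iff_le_comap]
    intro x hx
    exact IsNilpotent.map hx (algebraMap A Ap)
  have part1 : ∀ y ∈ Ideal.map (algebraMap A Ap) (nilradical A),
      ∃ x ∈ nilradical A, algebraMap A Ap x = y := fun y hy => knil y (map_le hy)
  have part2 : Ideal.map (algebraMap A Ap) (nilradical A) = nilradical Ap := by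
    refine le_antisymm map_le fun y hy => ?_
    obtain ⟨x, hx, rfl⟩ := knil y hy
    exact Ideal.mem_map_of_mem _ hx
  -- f sends powers of p correctly
  have hfpow : ∀ n : ℕ, f (algebraMap A Ap ((p : A) ^ n)) =
      algebraMap (A ⧸ nilradical A) Bp ((p : A ⧸ nilradical A) ^ n) := by
    intro n
    rw [hf]
    congr 1
  -- surjectivity of f
  have fsurj : Function.Surjective f := by
    intro y
    obtain ⟨⟨b, s⟩, hs⟩ := IsLocalization.surj (Submonoid.powers ((p : A ⧸ nilradical A))) y
    obtain ⟨n, hn⟩ := s.2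
    have hn' : ((p : A ⧸ nilradical A)) ^ n = ↑s := hn
    obtain ⟨a, rfl⟩ := Ideal.Quotient.mk_surjective b
    have hs' : y * algebraMap (A ⧸ nilradical A) Bp ↑s =
        algebraMap (A ⧸ nilradical A) Bp (Ideal.Quotient.mk (nilradical A) a) := hs
    set t : Submonoid.powers (p : A) := ⟨(p : A) ^ n, n, rfl⟩ with ht
    refine ⟨IsLocalization.mk' Ap a t, ?_⟩
    have hu : IsUnit (algebraMap (A ⧸ nilradical A) Bp ((s : A ⧸ nilradical A))) :=
      IsLocalization.map_units Bp s
    refine hu.mul_right_cancel ?_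
    have hspec : IsLocalization.mk' Ap a t * algebraMap A Ap ((p : A) ^ n) =
        algebraMap A Ap a := IsLocalization.mk'_spec Ap a t
    rw [hs', ← hf, ← hn', ← hfpow n, ← map_mul, hspec]
  -- kernel of f
  have hker : ∀ y : Ap, f y = 0 ↔ y ∈ Ideal.map (algebraMap A Ap) (nilradical A) := by
    intro y
    constructor
    · intro hy0
      obtain ⟨⟨a, s⟩, hs⟩ := IsLocalization.surj (Submonoid.powers (p : A)) y
      have h1 : algebraMap (A ⧸ nilradical A) Bp (Ideal.Quotient.mk (nilradical A) a) = 0 := by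
        have := congrArg f hs
        rw [map_mul, hy0, zero_mul, hf] at this
        exact this.symm
      rw [IsLocalization.map_eq_zero_iff (Submonoid.powers ((p : A ⧸ nilradical A))) Bp] at h1
      obtain ⟨m, hm⟩ := h1
      obtain ⟨k, hk⟩ := m.2
      have hnil : (p : A) ^ k * a ∈ nilradical A := by
        rw [← Ideal.Quotient.eq_zero_iff_mem]
        have : (Ideal.Quotient.mk (nilradical A)) ((p : A) ^ k * a) =
            (m : A ⧸ nilradical A) * Ideal.Quotient.mk (nilradical A) a := by
          rw [← hk, map_mul, map_pow, map_natCast]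
        rw [this, hm]
      have hanil : a ∈ nilradical A := by
        obtain ⟨j, hj⟩ := hnil
        rw [mul_pow, ← pow_mul] at hj
        exact ⟨j, htfpow (k * j) _ hj⟩
      have hmem : algebraMap A Ap a ∈ Ideal.map (algebraMap A Ap) (nilradical A) :=
        Ideal.mem_map_of_mem _ hanil
      have hu : IsUnit (algebraMap A Ap ((s : A))) := IsLocalization.map_units Ap s
      have : y = algebraMap A Ap a * ↑hu.unit⁻¹ := by
        rw [Units.eq_mul_inv_iff_mul_eq, IsUnit.unit_spec]
        exact hs
      rw [this]
      exact Ideal.mul_mem_right _ _ hmem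
    · intro hy
      obtain ⟨x, hx, rfl⟩ := part1 _ hy
      rw [hf, Ideal.Quotient.eq_zero_iff_mem.mpr hx, map_zero]
  -- A/I is p-torsion-free
  have htfq : ∀ a : A ⧸ nilradical A, (p : A ⧸ nilradical A) * a = 0 → a = 0 := by
    intro a ha
    obtain ⟨b, rfl⟩ := Ideal.Quotient.mk_surjective a
    have h0 : (Ideal.Quotient.mk (nilradical A)) ((p : A) * b) = 0 := by
      rw [map_mul, map_natCast]; exact ha
    rw [Ideal.Quotient.eq_zero_iff_mem] at h0
    obtain ⟨k, hk⟩ := h0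
    rw [mul_pow] at hk
    rw [Ideal.Quotient.eq_zero_iff_mem]
    exact ⟨k, htfpow k _ hk⟩
  refine ⟨part1, part2, fsurj, hker, htfq, ?_⟩
  -- A/I is integrally closed in Bp
  intro y hy
  obtain ⟨P, hPm, hP⟩ := hy
  -- lift P to a monic polynomial Q over A
  have hlifts : P ∈ Polynomial.lifts (Ideal.Quotient.mk (nilradical A)) := by
    rw [Polynomial.lifts_iff_coeff_lifts]
    intro n
    exact Ideal.Quotient.mk_surjective (P.coeff n)
  obtain ⟨Q, hQmap, -, hQm⟩ := Polynomial.lifts_and_natDegree_eq_and_monic hlifts hPm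
  obtain ⟨z, hz⟩ := fsurj y
  -- f (aeval z Q) = aeval y P = 0
  have hcomp : (f.comp (algebraMap A Ap)) =
      (algebraMap (A ⧸ nilradical A) Bp).comp (Ideal.Quotient.mk (nilradical A)) :=
    RingHom.ext hf
  have hfz : f (Polynomial.aeval z Q) = 0 := by
    rw [Polynomial.aeval_def, Polynomial.hom_eval₂, hcomp, hz,
      ← Polynomial.eval₂_map, hQmap]
    exact hP
  obtain ⟨x, hxnil, hxeq⟩ := part1 _ ((hker _).mp hfz)
  -- We instead use Q - C x after noting aeval z Q = algebraMap x
  have hmon : (Q - Polynomial.C x).Monic ∨ Q.natDegree = 0 := by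
    rcases Nat.eq_zero_or_pos Q.natDegree with h0 | hpos
    · exact Or.inr h0
    · left
      have : (Polynomial.C x).degree < Q.degree :=
        lt_of_le_of_lt Polynomial.degree_C_le (Polynomial.natDegree_pos_iff_degree_pos.mp hpos)
      rw [sub_eq_add_neg]
      exact hQm.add_of_left (by rwa [Polynomial.degree_neg])
  rcases hmon with hmon | hdeg0
  · have hintz : IsIntegral A z := by
      refine ⟨Q - Polynomial.C x, hmon, ?_⟩
      rw [Polynomial.eval₂_sub, Polynomial.eval₂_C, ← Polynomial.aeval_def, ← hxeq, sub_self]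
    obtain ⟨a, ha⟩ := hic' z hintz
    refine ⟨Ideal.Quotient.mk (nilradical A) a, ?_⟩
    rw [← hf, ha, hz]
  · -- degenerate case: Q = 1, so P = 1, so Bp is trivial
    have hQ1 : Q = 1 := Polynomial.eq_one_of_monic_natDegree_zero hQm hdeg0
    have hP1 : P = 1 := by rw [← hQmap, hQ1, Polynomial.map_one]
    rw [hP1, Polynomial.eval₂_one] at hP
    exact ⟨0, by rw [map_zero, ← one_mul y, hP, zero_mul]⟩
end

section
/- Let A be a p-torsion-free ring which is Witt-perfect at p, and let B be the integral closure of A in A[1/p]. If B/A is killed by every ideal I of A satisfying (p^m) ⊆ I and I^n ⊆ (p) for some positive integers m, n, then B is also Witt-perfect at p. -/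
open WittVector

open Function Finset

namespace DK

set_option linter.unusedSectionVars false

variable {p : ℕ} [hp : Fact p.Prime]

section Generic

variable {R S : Type*} [CommRing R] [CommRing S]

/-- aeval naturality for integer polynomials -/
lemma ringHom_aeval (ψ : R →+* S) (g : ℕ → R) (P : MvPolynomial ℕ ℤ) :
    ψ (MvPolynomial.aeval (R := ℤ) g P) = MvPolynomial.aeval (R := ℤ) (fun i => ψ (g i)) P := by
  have h1 : (ψ.comp ((MvPolynomial.aeval (R := ℤ) g : MvPolynomial ℕ ℤ →ₐ[ℤ] R).toRingHom)) =
      ((MvPolynomial.aeval (R := ℤ) (fun i => ψ (g i)) :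
        MvPolynomial ℕ ℤ →ₐ[ℤ] S).toRingHom) := by
    apply MvPolynomial.ringHom_ext
    · intro r
      simp
    · intro i
      simp
  exact RingHom.congr_fun h1 P

lemma map_frobenius_comm (ψ : R →+* S) (X : WittVector p R) :
    WittVector.map ψ (WittVector.frobenius X) = WittVector.frobenius (WittVector.map ψ X) := by
  ext n
  rw [map_coeff, coeff_frobenius, coeff_frobenius]
  rw [ringHom_aeval]
  rfl

variable (φ : R →+* S)

/-- the ghost sequence of a Witt vector, pushed into `S`. -/
noncomputable def wg (X : WittVector p R) : ℕ → S :=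
  fun k => ghostComponent k (WittVector.map φ X)

lemma wg_eq_sum (X : WittVector p R) (k : ℕ) :
    wg φ X k = ∑ i ∈ range (k + 1), (p : S) ^ i * (φ (X.coeff i)) ^ p ^ (k - i) := by
  rw [wg, ghostComponent_apply, aeval_wittPolynomial]
  refine Finset.sum_congr rfl fun i _ => ?_
  rw [map_coeff]

lemma wg_add (X Y : WittVector p R) (k : ℕ) : wg φ (X + Y) k = wg φ X k + wg φ Y k := by
  simp [wg]

lemma wg_sub (X Y : WittVector p R) (k : ℕ) : wg φ (X - Y) k = wg φ X k - wg φ Y k := by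
  simp [wg]

lemma wg_mul (X Y : WittVector p R) (k : ℕ) : wg φ (X * Y) k = wg φ X k * wg φ Y k := by
  simp [wg]

lemma wg_zero (k : ℕ) : wg φ (0 : WittVector p R) k = 0 := by simp [wg]

lemma wg_one (k : ℕ) : wg φ (1 : WittVector p R) k = 1 := by simp [wg]

lemma wg_pmul (i : ℕ) (X : WittVector p R) (k : ℕ) :
    wg φ ((p : WittVector p R) ^ i * X) k = (p : S) ^ i * wg φ X k := by
  simp [wg]

lemma wg_natCast (n k : ℕ) : wg φ ((n : WittVector p R)) k = n := by
  simp [wg]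

lemma wg_natmul (n : ℕ) (X : WittVector p R) (k : ℕ) :
    wg φ ((n : WittVector p R) * X) k = n * wg φ X k := by
  simp [wg]

lemma wg_teichmuller (r : R) (k : ℕ) :
    wg φ (teichmuller p r) k = (φ r) ^ p ^ k := by
  rw [wg, map_teichmuller, ghostComponent_teichmuller]

lemma wg_verschiebung_zero (X : WittVector p R) : wg φ (verschiebung X) 0 = 0 := by
  rw [wg, map_verschiebung, ghostComponent_zero_verschiebung]

lemma wg_verschiebung_succ (X : WittVector p R) (k : ℕ) :
    wg φ (verschiebung X) (k + 1) = p * wg φ X k := by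
  rw [wg, map_verschiebung, ghostComponent_verschiebung]
  rfl

lemma wg_frobenius (X : WittVector p R) (k : ℕ) :
    wg φ (WittVector.frobenius X) k = wg φ X (k + 1) := by
  rw [wg, map_frobenius_comm, ghostComponent_frobenius]
  rfl

lemma wg_zeroth (X : WittVector p R) : wg φ X 0 = φ (X.coeff 0) := by
  rw [wg_eq_sum]
  simp

/-- `wg … j` for `j ≤ n` only depends on the first `n+1` coefficients -/
lemma wg_eq_of_coeff_eq {Z Z' : WittVector p R} {n : ℕ}
    (h : ∀ i ≤ n, Z.coeff i = Z'.coeff i) {j : ℕ} (hj : j ≤ n) :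
    wg φ Z j = wg φ Z' j := by
  rw [wg_eq_sum, wg_eq_sum]
  refine Finset.sum_congr rfl fun i hi => ?_
  rw [Finset.mem_range] at hi
  rw [h i (le_trans (Nat.lt_succ_iff.mp hi) hj)]

lemma truncateFun_eq_of_wg (hφ : Injective φ) (hu : IsUnit ((p : ℕ) : S))
    {Z Z' : WittVector p R} {n : ℕ} (h : ∀ j ≤ n, wg φ Z j = wg φ Z' j) :
    ∀ i ≤ n, Z.coeff i = Z'.coeff i := by
  intro i hi
  induction i using Nat.strong_induction_on with
  | _ i IH =>
    have hz := h i hi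
    rw [wg_eq_sum, wg_eq_sum, Finset.sum_range_succ, Finset.sum_range_succ] at hz
    have heq : ∑ x ∈ range i, (p : S) ^ x * φ (Z.coeff x) ^ p ^ (i - x)
        = ∑ x ∈ range i, (p : S) ^ x * φ (Z'.coeff x) ^ p ^ (i - x) := by
      refine Finset.sum_congr rfl fun x hx => ?_
      rw [Finset.mem_range] at hx
      rw [IH x hx (le_trans (le_of_lt hx) hi)]
    rw [heq] at hz
    have hz2 : (p : S) ^ i * φ (Z.coeff i) ^ p ^ (i - i)
        = (p : S) ^ i * φ (Z'.coeff i) ^ p ^ (i - i) := by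
      exact add_left_cancel hz
    rw [Nat.sub_self, pow_zero, pow_one, pow_one] at hz2
    exact hφ ((hu.pow i).mul_right_injective hz2)

/-- a Witt vector with vanishing 0th coefficient is a Verschiebung -/
lemma exists_eq_verschiebung {X : WittVector p R} (h : X.coeff 0 = 0) :
    ∃ Y : WittVector p R, X = verschiebung Y := by
  refine ⟨WittVector.mk p (fun i => X.coeff (i + 1)), ?_⟩
  ext n
  cases n with
  | zero => rw [verschiebung_coeff_zero, h]
  | succ n => rw [verschiebung_coeff_succ]; rfl

lemma ghostComponent_zeroth (X : WittVector p R) : ghostComponent 0 X = X.coeff 0 := by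
  rw [ghostComponent_apply, wittPolynomial_zero, MvPolynomial.aeval_X]

lemma ghost0_teichmuller (r : R) : ghostComponent 0 (teichmuller p r) = r := by
  rw [ghostComponent_zeroth, teichmuller_coeff_zero]

lemma coeff_zero_of_wg (X : WittVector p R) : X.coeff 0 = ghostComponent 0 X :=
  (ghostComponent_zeroth X).symm

lemma wg_viter (X : WittVector p R) (k j : ℕ) :
    wg φ (verschiebung^[k] X) (j + k) = (p : S) ^ k * wg φ X j := by
  induction k with
  | zero => simp
  | succ k IH =>
    rw [Function.iterate_succ_apply', show j + (k + 1) = (j + k) + 1 by ring]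
    rw [wg, map_verschiebung, ghostComponent_verschiebung]
    rw [show (ghostComponent (j+k)) ((WittVector.map φ) (verschiebung^[k] X))
      = wg φ (verschiebung^[k] X) (j+k) from rfl, IH]
    ring

lemma wg_versch_pmul (i : ℕ) (X : WittVector p R) (j : ℕ) :
    wg φ (verschiebung ((p : WittVector p R) ^ i * X)) j
      = (p : S) ^ i * wg φ (verschiebung X) j := by
  cases j with
  | zero => rw [wg_verschiebung_zero, wg_verschiebung_zero, mul_zero]
  | succ j =>
    rw [wg_verschiebung_succ, wg_verschiebung_succ, wg_pmul]
    ring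

lemma wg_map_comp {R' : Type*} [CommRing R'] (ψ : R' →+* R) (X : WittVector p R') (k : ℕ) :
    wg φ (WittVector.map ψ X) k = wg (φ.comp ψ) X k := by
  rfl

lemma coeff_eq_of_truncate_eq {n : ℕ} {Z Z' : WittVector p R}
    (h : WittVector.truncate (p := p) n Z = WittVector.truncate n Z') :
    ∀ i < n, Z.coeff i = Z'.coeff i := by
  intro i hi
  have := congrArg (fun w => TruncatedWittVector.coeff ⟨i, hi⟩ w) h
  simpa [WittVector.coeff_truncate] using this

lemma out_coeff_eq {n : ℕ} (Z : WittVector p R) :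
    ∀ i < n, (WittVector.truncate (p := p) n Z).out.coeff i = Z.coeff i := by
  intro i hi
  have h1 := TruncatedWittVector.coeff_out (WittVector.truncate (p := p) n Z) ⟨i, hi⟩
  rw [h1, WittVector.coeff_truncate]

lemma shift_one (hsurj : ∀ m, Surjective (truncatedFrobenius p R m)) (m : ℕ)
    (X : WittVector p R) : ∃ Z : WittVector p R, ∀ j < m, wg φ Z (j + 1) = wg φ X j := by
  cases m with
  | zero => exact ⟨0, fun j hj => absurd hj (Nat.not_lt_zero j)⟩
  | succ n =>
    obtain ⟨x, hx⟩ := hsurj n (WittVector.truncate (n + 1) X)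
    refine ⟨x.out, fun j hj => ?_⟩
    rw [← wg_frobenius]
    have hco := coeff_eq_of_truncate_eq (n := n + 1) hx
    exact wg_eq_of_coeff_eq φ (fun i hi => hco i (Nat.lt_succ_of_le hi)) (Nat.lt_succ_iff.mp hj)

lemma shift_k (hsurj : ∀ m, Surjective (truncatedFrobenius p R m)) (k m : ℕ)
    (X : WittVector p R) : ∃ Z : WittVector p R, ∀ j < m, wg φ Z (j + k) = wg φ X j := by
  induction k with
  | zero => exact ⟨X, fun j _ => rfl⟩
  | succ k IH =>
    obtain ⟨Z₁, hZ₁⟩ := IH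
    obtain ⟨Z₂, hZ₂⟩ := shift_one φ hsurj (m + k) Z₁
    refine ⟨Z₂, fun j hj => ?_⟩
    have h1 : j + (k + 1) = (j + k) + 1 := by ring
    rw [h1, hZ₂ (j + k) (by omega), hZ₁ j hj]

lemma surj_of_shift (hφ : Injective φ) (hu : IsUnit ((p : ℕ) : S)) (n : ℕ)
    (H : ∀ X : WittVector p R, ∃ Z : WittVector p R,
      ∀ j < n + 1, wg φ Z (j + 1) = wg φ X j) :
    Surjective (truncatedFrobenius p R n) := by
  intro y
  obtain ⟨Z, hZ⟩ := H y.out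
  refine ⟨WittVector.truncate (n + 2) Z, ?_⟩
  unfold truncatedFrobenius
  have hout : ∀ i ≤ n + 1, (WittVector.truncate (p := p) (n + 2) Z).out.coeff i = Z.coeff i :=
    fun i hi => out_coeff_eq Z i (by omega)
  have hwg : ∀ j ≤ n,
      wg φ (WittVector.frobenius (WittVector.truncate (p := p) (n + 2) Z).out) j
        = wg φ y.out j := by
    intro j hj
    rw [wg_frobenius]
    rw [wg_eq_of_coeff_eq φ hout (by omega : j + 1 ≤ n + 1)]
    exact hZ j (by omega)
  have hcoeff := truncateFun_eq_of_wg φ hφ hu hwg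
  ext i
  rw [WittVector.coeff_truncate]
  rw [hcoeff i.val (Nat.lt_succ_iff.mp i.isLt)]
  exact TruncatedWittVector.coeff_out y i

lemma wg_expand_one (Z : WittVector p R) :
    wg φ Z 1 = (φ (Z.coeff 0)) ^ p + p * φ (Z.coeff 1) := by
  rw [wg_eq_sum]
  rw [Finset.sum_range_succ, Finset.sum_range_succ, Finset.range_zero, Finset.sum_empty]
  norm_num

lemma wg_expand_two (Z : WittVector p R) :
    wg φ Z 2 = (φ (Z.coeff 0)) ^ p ^ 2 + p * (φ (Z.coeff 1)) ^ p + p ^ 2 * φ (Z.coeff 2) := by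
  rw [wg_eq_sum]
  rw [Finset.sum_range_succ, Finset.sum_range_succ, Finset.sum_range_succ,
    Finset.range_zero, Finset.sum_empty]
  norm_num

/-- item (i): Frobenius is surjective mod p -/
lemma exists_padic_root (hsurj : ∀ m, Surjective (truncatedFrobenius p R m)) (x : R) :
    ∃ s t : R, φ x = (φ s) ^ p + p * φ t := by
  obtain ⟨Z, hZ⟩ := shift_k φ hsurj 1 1 (teichmuller p x)
  have h := hZ 0 (by norm_num)
  rw [wg_teichmuller, pow_zero, pow_one] at h
  rw [zero_add, wg_expand_one] at h
  exact ⟨Z.coeff 0, Z.coeff 1, h.symm⟩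

/-- the p-th root of -p structure: θ with θ^p = -pv and v^p = 1 - pμ. -/
lemma exists_theta (hsurj : ∀ m, Surjective (truncatedFrobenius p R m))
    (hu : IsUnit ((p : ℕ) : S)) :
    ∃ θ v μ : R, (φ θ) ^ p = -(p * φ v) ∧ (φ v) ^ p = 1 - p * φ μ := by
  obtain ⟨Z, hZ⟩ := shift_k φ hsurj 1 2 (verschiebung (1 : WittVector p R))
  have h1 := hZ 0 (by norm_num)
  have h2 := hZ 1 (by norm_num)
  rw [zero_add, wg_expand_one, wg_verschiebung_zero] at h1
  rw [wg_expand_two, wg_verschiebung_succ, wg_one, mul_one] at h2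
  obtain ⟨q, hq⟩ : ∃ q, p = q + 2 := ⟨p - 2, by have := hp.out.two_le; omega⟩
  set a0 := φ (Z.coeff 0) with ha0
  set a1 := φ (Z.coeff 1) with ha1
  set a2 := φ (Z.coeff 2) with ha2
  refine ⟨Z.coeff 0, Z.coeff 1, Z.coeff 2 + (-1) ^ p * (p : R) ^ (p - 2) * (Z.coeff 1) ^ p,
    by rw [← ha0, ← ha1]; linear_combination h1, ?_⟩
  have hμ : φ (Z.coeff 2 + (-1) ^ p * (p : R) ^ (p - 2) * Z.coeff 1 ^ p)
      = a2 + (-1) ^ p * ((p : ℕ) : S) ^ (p - 2) * a1 ^ p := by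
    rw [map_add, map_mul, map_mul, map_pow, map_pow, map_neg, map_one, map_natCast, map_pow,
      ← ha1, ← ha2]
  rw [hμ, ← ha1]
  have key : ((p : ℕ) : S) * (a1 ^ p) =
      ((p : ℕ) : S) * (1 - ((p : ℕ) : S) * (a2 + (-1) ^ p * ((p : ℕ) : S) ^ (p - 2) * a1 ^ p)) := by
    have e0 : a0 ^ p ^ 2 = (-1) ^ p * ((p : ℕ) : S) ^ p * a1 ^ p := by
      have h3 : a0 ^ p ^ 2 = (a0 ^ p) ^ p := by rw [← pow_mul, pow_two]
      have h4 : a0 ^ p = -(((p : ℕ) : S) * a1) := by linear_combination h1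
      rw [h3, h4, neg_pow, mul_pow]
      ring
    rw [e0] at h2
    have hsub : p - 2 = q := by omega
    rw [hsub]
    subst hq
    linear_combination h2
  exact hu.mul_right_injective key

/-- item (ii): every `p·x` is a p-th power modulo `p²`. -/
lemma exists_pmul_root (hsurj : ∀ m, Surjective (truncatedFrobenius p R m))
    (hu : IsUnit ((p : ℕ) : S)) {θ v μ : R}
    (hθ : (φ θ) ^ p = -(p * φ v)) (hv : (φ v) ^ p = 1 - p * φ μ) (x : R) :
    ∃ y z : R, p * φ x = (φ y) ^ p + (p : S) ^ 2 * φ z := by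
  obtain ⟨Z, hZ⟩ := shift_k φ hsurj 1 2
    (verschiebung (teichmuller p (-(x * v ^ (p - 1)))))
  have h1 := hZ 0 (by norm_num)
  have h2 := hZ 1 (by norm_num)
  rw [zero_add, wg_expand_one, wg_verschiebung_zero] at h1
  rw [wg_expand_two, wg_verschiebung_succ, wg_teichmuller, pow_zero, pow_one] at h2
  obtain ⟨q, hq⟩ : ∃ q, p = q + 2 := ⟨p - 2, by have := hp.out.two_le; omega⟩
  refine ⟨θ * Z.coeff 1,
    x * μ - v * Z.coeff 2 - (-1) ^ p * (p : R) ^ (p - 2) * (v * Z.coeff 1 ^ p), ?_⟩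
  have hx' : φ (-(x * v ^ (p - 1))) = -(φ x * (φ v) ^ (p - 1)) := by
    rw [map_neg, map_mul, map_pow]
  rw [hx'] at h2
  have e0 : (φ (Z.coeff 0)) ^ p ^ 2 = (-1) ^ p * ((p : ℕ) : S) ^ p * (φ (Z.coeff 1)) ^ p := by
    have h3 : (φ (Z.coeff 0)) ^ p ^ 2 = ((φ (Z.coeff 0)) ^ p) ^ p := by rw [← pow_mul, pow_two]
    have h4 : (φ (Z.coeff 0)) ^ p = -(((p : ℕ) : S) * φ (Z.coeff 1)) := by linear_combination h1
    rw [h3, h4, neg_pow, mul_pow]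
    ring
  rw [e0] at h2
  have hz : φ (x * μ - v * Z.coeff 2 - (-1) ^ p * (p : R) ^ (p - 2) * (v * Z.coeff 1 ^ p))
      = φ x * φ μ - φ v * φ (Z.coeff 2)
        - (-1) ^ p * ((p : ℕ) : S) ^ (p - 2) * (φ v * (φ (Z.coeff 1)) ^ p) := by
    simp only [map_sub, map_mul, map_pow, map_neg, map_one, map_natCast]
  have hy : (φ (θ * Z.coeff 1)) ^ p = -(((p : ℕ) : S) * φ v) * (φ (Z.coeff 1)) ^ p := by
    rw [map_mul, mul_pow, hθ]
  rw [hy, hz]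
  have key : ((p : ℕ) : S) * ((p : S) * φ x) =
      ((p : ℕ) : S) * (-(((p : ℕ) : S) * φ v) * (φ (Z.coeff 1)) ^ p +
        (p : S) ^ 2 * (φ x * φ μ - φ v * φ (Z.coeff 2)
          - (-1) ^ p * ((p : ℕ) : S) ^ (p - 2) * (φ v * (φ (Z.coeff 1)) ^ p))) := by
    subst hq
    have hs1 : q + 2 - 1 = q + 1 := by omega
    have hs2 : q + 2 - 2 = q := by omega
    rw [hs1] at h2
    rw [hs2]
    linear_combination ((q + 2 : ℕ) : S) * φ v * h2 - ((q + 2 : ℕ) : S) ^ 2 * φ x * hv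
  exact hu.mul_right_injective key

section machine

variable {T : Type*} [CommRing T] (ψ : T →+* S)

lemma pow_add_pmul (x y : T) (m : ℕ) : ∃ J : T, (x + p * y) ^ m = x ^ m + p * J := by
  induction m with
  | zero => exact ⟨0, by ring⟩
  | succ m IH =>
    obtain ⟨J, hJ⟩ := IH
    exact ⟨x ^ m * y + J * x + p * (J * y), by rw [pow_succ, hJ]; ring⟩

lemma rootIter (hroot : ∀ b : T, ∃ c d : T, b = c ^ p + p * d) (k : ℕ) (b : T) :
    ∃ γ δ : T, b = γ ^ p ^ k + p * δ := by
  induction k with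
  | zero =>
    refine ⟨b, 0, ?_⟩
    rw [pow_zero, pow_one, mul_zero, add_zero]
  | succ k IH =>
    obtain ⟨γ, δ, hγδ⟩ := IH
    obtain ⟨c, d, hcd⟩ := hroot γ
    obtain ⟨J, hJ⟩ := pow_add_pmul (p := p) (c ^ p) d (p ^ k)
    refine ⟨c, J + δ, ?_⟩
    rw [hγδ, hcd, hJ, ← pow_mul]
    rw [show p * p ^ k = p ^ (k + 1) by rw [pow_succ]; ring]
    ring

/-- The main induction: over a ring `T` with mod-p roots and exact ghost-preimages of `V(1)`,
`F^k` is "ghost-surjective" at all levels. -/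
lemma EB (hroot : ∀ b : T, ∃ c d : T, b = c ^ p + p * d)
    (hΘ : ∀ k m : ℕ, ∃ Z : WittVector p T, ∀ j < m,
      wg ψ Z (j + k) = wg ψ (verschiebung (1 : WittVector p T)) j) :
    ∀ n k (X : WittVector p T), ∃ Z : WittVector p T,
      ∀ j < n, wg ψ Z (j + k) = wg ψ X j := by
  intro n
  induction n using Nat.strong_induction_on with
  | _ n IH =>
  intro k X
  rcases n with _ | m
  · exact ⟨0, fun j hj => absurd hj (Nat.not_lt_zero j)⟩
  -- Verschiebung piece
  have PV : ∀ Y : WittVector p T, ∃ Z : WittVector p T,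
      ∀ j < m + 1, wg ψ Z (j + k) = wg ψ (verschiebung Y) j := by
    intro Y
    obtain ⟨TT, hT⟩ := IH m (Nat.lt_succ_self m) (k + 1) Y
    obtain ⟨ZΘ, hΘ'⟩ := hΘ k (m + 1)
    refine ⟨ZΘ * TT, fun j hj => ?_⟩
    rw [wg_mul]
    cases j with
    | zero =>
      rw [hΘ' 0 hj, wg_verschiebung_zero, wg_verschiebung_zero, zero_mul]
    | succ j' =>
      rw [hΘ' (j' + 1) hj, wg_verschiebung_succ, wg_verschiebung_succ, wg_one, mul_one]
      rw [show j' + 1 + k = j' + (k + 1) by ring, hT j' (by omega)]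
  -- p-power Teichmuller pieces
  have PP : ∀ (mm i : ℕ), 1 ≤ i → k ≤ i + mm → ∀ δ : T, ∃ Z : WittVector p T,
      ∀ j < m + 1, wg ψ Z (j + k) = (p : S) ^ i * (ψ δ) ^ p ^ j := by
    intro mm
    induction mm with
    | zero =>
      intro i hi hik δ
      rw [Nat.add_zero] at hik
      refine ⟨(p : WittVector p T) ^ (i - k) * (verschiebung^[k] (teichmuller p δ)),
        fun j hj => ?_⟩
      rw [wg_pmul, wg_viter, wg_teichmuller, ← mul_assoc, ← pow_add]
      rw [Nat.sub_add_cancel hik]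
    | succ mm IHmm =>
      intro i hi hik δ
      by_cases hik2 : k ≤ i
      · refine ⟨(p : WittVector p T) ^ (i - k) * (verschiebung^[k] (teichmuller p δ)),
          fun j hj => ?_⟩
        rw [wg_pmul, wg_viter, wg_teichmuller, ← mul_assoc, ← pow_add]
        rw [Nat.sub_add_cancel hik2]
      · obtain ⟨γ, δ', hroot'⟩ := rootIter hroot k δ
        set W := teichmuller p δ - teichmuller p (γ ^ p ^ k)
          - (p : WittVector p T) * teichmuller p δ' with hWdef
        have hW0 : W.coeff 0 = 0 := by
          rw [coeff_zero_of_wg, hWdef, map_sub, map_sub, map_mul, ghost0_teichmuller,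
            ghost0_teichmuller, ghost0_teichmuller, map_natCast, hroot']
          ring
        obtain ⟨W₁, hW₁⟩ := exists_eq_verschiebung hW0
        have hdecomp : ∀ jj, wg ψ (teichmuller p δ) jj
            = wg ψ (teichmuller p (γ ^ p ^ k)) jj + (p : S) * wg ψ (teichmuller p δ') jj
              + wg ψ (verschiebung W₁) jj := by
          intro jj
          have hW2 : teichmuller p δ = teichmuller p (γ ^ p ^ k)
              + (p : WittVector p T) * teichmuller p δ' + verschiebung W₁ := by
            rw [← hW₁, hWdef]; ring
          rw [hW2, wg_add, wg_add, wg_natmul]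
        obtain ⟨Z₂, hZ₂⟩ := IHmm (i + 1) (by omega) (by omega) δ'
        obtain ⟨Z₃, hZ₃⟩ := PV ((p : WittVector p T) ^ i * W₁)
        refine ⟨(p : WittVector p T) ^ i * teichmuller p γ + Z₂ + Z₃, fun j hj => ?_⟩
        rw [wg_add, wg_add, wg_pmul, wg_teichmuller, hZ₂ j hj, hZ₃ j hj]
        rw [wg_versch_pmul]
        have hexp : (ψ γ) ^ p ^ (j + k) = ((ψ γ) ^ p ^ k) ^ p ^ j := by
          rw [← pow_mul, ← pow_add, Nat.add_comm k j]
        rw [hexp, ← map_pow]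
        have := hdecomp j
        rw [wg_teichmuller, wg_teichmuller, wg_teichmuller] at this
        rw [show (ψ (γ ^ p ^ k)) ^ p ^ j = (ψ δ) ^ p ^ j - (p:S) * (ψ δ') ^ p ^ j
          - wg ψ (verschiebung W₁) j by linear_combination -this]
        ring
  -- Teichmuller piece
  have PT : ∀ b : T, ∃ Z : WittVector p T, ∀ j < m + 1,
      wg ψ Z (j + k) = (ψ b) ^ p ^ j := by
    intro b
    obtain ⟨γ, δ, hroot'⟩ := rootIter hroot k b
    set W := teichmuller p b - teichmuller p (γ ^ p ^ k)
      - (p : WittVector p T) * teichmuller p δ with hWdef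
    have hW0 : W.coeff 0 = 0 := by
      rw [coeff_zero_of_wg, hWdef, map_sub, map_sub, map_mul, ghost0_teichmuller,
        ghost0_teichmuller, ghost0_teichmuller, map_natCast, hroot']
      ring
    obtain ⟨W₁, hW₁⟩ := exists_eq_verschiebung hW0
    obtain ⟨Z₂, hZ₂⟩ := PP k 1 (le_refl 1) (by omega) δ
    obtain ⟨Z₃, hZ₃⟩ := PV W₁
    refine ⟨teichmuller p γ + Z₂ + Z₃, fun j hj => ?_⟩
    rw [wg_add, wg_add, wg_teichmuller, hZ₂ j hj, hZ₃ j hj]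
    have hW2 : teichmuller p b = teichmuller p (γ ^ p ^ k)
        + (p : WittVector p T) * teichmuller p δ + verschiebung W₁ := by
      rw [← hW₁, hWdef]; ring
    have hjj := congrArg (fun V => wg ψ V j) hW2
    rw [wg_add, wg_add, wg_teichmuller, wg_teichmuller] at hjj
    have hpmul : wg ψ ((p : WittVector p T) * teichmuller p δ) j
        = (p : S) * (ψ δ) ^ p ^ j := by
      rw [wg_natmul, wg_teichmuller]
    rw [hpmul] at hjj
    have hexp : (ψ γ) ^ p ^ (j + k) = (ψ (γ ^ p ^ k)) ^ p ^ j := by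
      rw [map_pow, ← pow_mul, ← pow_add, Nat.add_comm k j]
    rw [hexp]
    rw [pow_one]
    linear_combination -hjj
  -- assemble
  have hX0 : (X - teichmuller p (X.coeff 0)).coeff 0 = 0 := by
    rw [coeff_zero_of_wg, map_sub, ghostComponent_zeroth, ghostComponent_zeroth,
      teichmuller_coeff_zero, sub_self]
  obtain ⟨X₁, hX₁⟩ := exists_eq_verschiebung hX0
  obtain ⟨Za, hZa⟩ := PT (X.coeff 0)
  obtain ⟨Zb, hZb⟩ := PV X₁
  refine ⟨Za + Zb, fun j hj => ?_⟩
  rw [wg_add, hZa j hj, hZb j hj]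
  have hX2 : X = teichmuller p (X.coeff 0) + verschiebung X₁ := by
    rw [← hX₁]; ring
  have := congrArg (fun V => wg ψ V j) hX2
  rw [wg_add, wg_teichmuller] at this
  linear_combination this.symm

end machine

end Generic

section Main

variable {A : Type*} [CommRing A] {Ap : Type*} [CommRing Ap] [Algebra A Ap]
  [IsLocalization.Away (p : A) Ap]

lemma punit (A : Type*) [CommRing A] (Ap : Type*) [CommRing Ap] [Algebra A Ap]
    [IsLocalization.Away ((p : ℕ) : A) Ap] : IsUnit ((p : ℕ) : Ap) := by
  have h := IsLocalization.Away.mul_invSelf (S := Ap) ((p : ℕ) : A)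
  rw [map_natCast] at h
  exact IsUnit.of_mul_eq_one _ h

/-- mod-p roots exist in the integral closure -/
lemma rootB
    (hkillp : ∀ b : Ap, b ∈ integralClosure A Ap → ∃ a : A, algebraMap A Ap a = (p : Ap) * b)
    (hi : ∀ x : A, ∃ s t : A,
      algebraMap A Ap x = (algebraMap A Ap s) ^ p + p * algebraMap A Ap t)
    (hii : ∀ x : A, ∃ y z : A,
      p * algebraMap A Ap x = (algebraMap A Ap y) ^ p + (p : Ap) ^ 2 * algebraMap A Ap z)
    {θ v μ : A}
    (hθ : (algebraMap A Ap θ) ^ p = -(p * algebraMap A Ap v))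
    (hv : (algebraMap A Ap v) ^ p = 1 - p * algebraMap A Ap μ)
    (b : ↥(integralClosure A Ap)) :
    ∃ c d : ↥(integralClosure A Ap), b = c ^ p + p * d := by
  obtain ⟨q, hq⟩ : ∃ q, p = q + 2 := ⟨p - 2, by have := hp.out.two_le; omega⟩
  set φ := algebraMap A Ap with hφdef
  obtain ⟨a, ha⟩ := hkillp ↑b b.2
  obtain ⟨y, z, hyz⟩ := hii (v ^ 2 * a)
  set π := IsLocalization.Away.invSelf (S := Ap) ((p : ℕ) : A) with hπdef
  have hπ : ((p : ℕ) : Ap) * π = 1 := by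
    have h := IsLocalization.Away.mul_invSelf (S := Ap) ((p : ℕ) : A)
    rw [map_natCast] at h
    exact h
  have hpu : IsUnit ((p : ℕ) : Ap) := IsUnit.of_mul_eq_one π hπ
  set c0 : Ap := φ y * (φ θ) ^ (2 * q + 2) * π ^ 2 with hc0def
  -- main computation : c0 ^ p = b * φ v ^ (2q+4) - φ z * φ v ^ (2q+2)
  have key : c0 ^ p = ↑b * (φ v) ^ (2 * q + 4) - φ z * (φ v) ^ (2 * q + 2) := by
    have hcancel := hpu.pow (2 * q + 4)
    apply hcancel.mul_right_injective
    show ((p : ℕ) : Ap) ^ (2 * q + 4) * c0 ^ p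
      = ((p : ℕ) : Ap) ^ (2 * q + 4) * (↑b * (φ v) ^ (2 * q + 4) - φ z * (φ v) ^ (2 * q + 2))
    have step1 : ((p : ℕ) : Ap) ^ (2 * q + 4) * c0 ^ p
        = (φ y) ^ p * ((φ θ) ^ p) ^ (2 * q + 2) * (((p : ℕ) : Ap) * π) ^ (2 * q + 4) := by
      rw [hc0def]
      subst hq
      ring
    rw [step1, hπ, one_pow, mul_one, hθ]
    have heven : Even (2 * q + 2) := ⟨q + 1, by ring⟩
    rw [heven.neg_pow]
    simp only [map_mul, map_pow] at hyz ha
    subst hq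
    linear_combination (-(((q + 2 : ℕ) : Ap) * φ v) ^ (2 * q + 2)) * hyz
      + ((q + 2 : ℕ) : Ap) ^ (2 * q + 3) * (φ v) ^ (2 * q + 4) * ha
  -- integrality of c0
  have hc0mem : c0 ∈ integralClosure A Ap := by
    rw [mem_integralClosure_iff]
    refine IsIntegral.of_pow hp.out.pos ?_
    rw [← mem_integralClosure_iff, key]
    refine Subalgebra.sub_mem _ (Subalgebra.mul_mem _ b.2 (Subalgebra.pow_mem _ ?_ _))
      (Subalgebra.mul_mem _ ?_ (Subalgebra.pow_mem _ ?_ _))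
    · exact (integralClosure A Ap).algebraMap_mem v
    · exact (integralClosure A Ap).algebraMap_mem z
    · exact (integralClosure A Ap).algebraMap_mem v
  obtain ⟨s, t, hst⟩ := hi (z * v ^ (2 * q + 2))
  simp only [map_mul, map_pow] at hst
  set C := c0 + φ s with hCdef
  have hCmem : C ∈ integralClosure A Ap :=
    Subalgebra.add_mem _ hc0mem ((integralClosure A Ap).algebraMap_mem s)
  have hr := add_pow_prime_eq hp.out c0 (φ s)
  set r := ∑ k ∈ Ioo 0 p, c0 ^ k * (φ s) ^ (p - k) * ((p.choose k / p : ℕ) : Ap) with hrdef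
  have hrmem : r ∈ integralClosure A Ap := by
    refine Subalgebra.sum_mem _ fun k _ => ?_
    exact Subalgebra.mul_mem _
      (Subalgebra.mul_mem _ (Subalgebra.pow_mem _ hc0mem _)
        (Subalgebra.pow_mem _ ((integralClosure A Ap).algebraMap_mem s) _))
      (Subalgebra.natCast_mem _ _)
  have hr2 : (p : Ap) * c0 * φ s * ∑ k ∈ Ioo 0 p, c0 ^ (k - 1) * φ s ^ (p - k - 1)
      * ((p.choose k / p : ℕ) : Ap) = p * r := by
    simp only [hrdef, Finset.mul_sum]
    refine Finset.sum_congr rfl fun k hk => ?_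
    rw [Finset.mem_Ioo] at hk
    obtain ⟨k', rfl⟩ : ∃ k', k = k' + 1 := ⟨k - 1, by omega⟩
    obtain ⟨l, hl⟩ : ∃ l, p - (k' + 1) = l + 1 := ⟨p - (k' + 1) - 1, by omega⟩
    rw [hl, Nat.add_sub_cancel, Nat.add_sub_cancel]
    ring
  set D := ↑b * (φ (2 * μ) - (p : Ap) * φ (μ ^ 2)) + φ t - r with hDdef
  have hDmem : D ∈ integralClosure A Ap := by
    refine Subalgebra.sub_mem _
      (Subalgebra.add_mem _ ?_ ((integralClosure A Ap).algebraMap_mem t)) hrmem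
    refine Subalgebra.mul_mem _ b.2 ?_
    exact Subalgebra.sub_mem _ ((integralClosure A Ap).algebraMap_mem _)
      (Subalgebra.mul_mem _ (Subalgebra.natCast_mem _ p)
        ((integralClosure A Ap).algebraMap_mem _))
  have hv4 : (φ v) ^ (2 * q + 4) = (1 - p * φ μ) ^ 2 := by
    have h1 : (φ v) ^ (2 * q + 4) = ((φ v) ^ p) ^ 2 := by
      rw [← pow_mul]
      congr 1
      omega
    rw [h1, hv]
  have hfinal : (↑b : Ap) = C ^ p + p * D := by
    rw [hCdef, hDdef]
    simp only [map_mul, map_pow, map_ofNat]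
    linear_combination (-1 : Ap) * hr - hr2 - key + hst - (↑b : Ap) * hv4
  refine ⟨⟨C, hCmem⟩, ⟨D, hDmem⟩, ?_⟩
  apply Subtype.ext
  push_cast
  exact hfinal

end Main

end DK

/-- Let `A` be a `p`-torsion-free ring which is Witt-perfect at `p`, and let `B` be the
integral closure of `A` in `A[1/p]`. If `B/A` is killed by every `p`-ideal of `A`
(an ideal `I` with `(p^m) ⊆ I` and `Iⁿ ⊆ (p)` for some `m, n ≥ 1`), then `B` is also
Witt-perfect at `p`. -/
theorem stmt9 (p : ℕ) [Fact p.Prime] (A : Type*) [CommRing A]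
    (Ap : Type*) [CommRing Ap] [Algebra A Ap] [IsLocalization.Away (p : A) Ap]
    (htf : ∀ a : A, (p : A) * a = 0 → a = 0)
    (hwp : IsWittPerfect p A)
    (hkill : ∀ I : Ideal A,
      (∃ m : ℕ, 1 ≤ m ∧ Ideal.span {(p : A) ^ m} ≤ I) →
      (∃ n : ℕ, 1 ≤ n ∧ I ^ n ≤ Ideal.span {(p : A)}) →
      ∀ x ∈ I, ∀ b ∈ integralClosure A Ap,
        ∃ a : A, algebraMap A Ap a = algebraMap A Ap x * b) :
    IsWittPerfect p (integralClosure A Ap) := by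
  intro n
  -- p is a unit in Ap
  have hu : IsUnit ((p : ℕ) : Ap) := DK.punit A Ap
  -- the algebra map A → Ap is injective
  have hpow : ∀ (m : ℕ) (z : A), z * (p : A) ^ m = 0 → z = 0 := by
    intro m
    induction m with
    | zero => intro z hz; rwa [pow_zero, mul_one] at hz
    | succ m IHm =>
      intro z hz
      apply IHm
      apply htf
      rw [show (p : A) * (z * (p : A) ^ m) = z * (p : A) ^ (m + 1) by ring, hz]
  have hφA : Function.Injective (algebraMap A Ap) := by
    apply IsLocalization.injective Ap (M := Submonoid.powers ((p : ℕ) : A))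
    rintro x ⟨m, rfl⟩
    rw [mem_nonZeroDivisors_iff_right]
    intro z hz
    exact hpow m z (by simpa using hz)
  -- the inclusion of the integral closure
  set B := integralClosure A Ap with hBdef
  let φB : ↥B →+* Ap := B.val.toRingHom
  have hφB : Function.Injective φB := fun x y h => Subtype.ext h
  -- p·B lands in A
  have hkillp : ∀ b : Ap, b ∈ integralClosure A Ap →
      ∃ a : A, algebraMap A Ap a = (p : Ap) * b := by
    intro b hb
    have h1 : ∃ m : ℕ, 1 ≤ m ∧ Ideal.span {(p : A) ^ m} ≤ Ideal.span {(p : A)} :=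
      ⟨1, le_refl 1, by rw [pow_one]⟩
    have h2 : ∃ m : ℕ, 1 ≤ m ∧ (Ideal.span {(p : A)}) ^ m ≤ Ideal.span {(p : A)} :=
      ⟨1, le_refl 1, by rw [pow_one]⟩
    obtain ⟨a, ha⟩ := hkill (Ideal.span {(p : A)}) h1 h2 (p : A)
      (Ideal.mem_span_singleton_self _) b hb
    refine ⟨a, ?_⟩
    rw [ha, map_natCast]
  -- scalar facts over A
  have hi := DK.exists_padic_root (algebraMap A Ap) hwp
  obtain ⟨θ, v, μ, hθ, hv⟩ := DK.exists_theta (algebraMap A Ap) hwp hu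
  have hii := DK.exists_pmul_root (algebraMap A Ap) hwp hu hθ hv
  -- mod-p roots in B
  have hroot : ∀ b : ↥B, ∃ c d : ↥B, b = c ^ p + p * d :=
    DK.rootB hkillp hi hii hθ hv
  -- exact ghost-preimages of V(1) in B, coming from A
  have hcomp : φB.comp (algebraMap A ↥B) = algebraMap A Ap := rfl
  have hΘ : ∀ k m : ℕ, ∃ Z : WittVector p ↥B, ∀ j < m,
      DK.wg φB Z (j + k) = DK.wg φB (verschiebung (1 : WittVector p ↥B)) j := by
    intro k m
    obtain ⟨ZA, hZA⟩ := DK.shift_k (algebraMap A Ap) hwp k m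
      (verschiebung (1 : WittVector p A))
    refine ⟨WittVector.map (algebraMap A ↥B) ZA, fun j hj => ?_⟩
    rw [DK.wg_map_comp, hcomp, hZA j hj]
    cases j with
    | zero => rw [DK.wg_verschiebung_zero, DK.wg_verschiebung_zero]
    | succ j' => rw [DK.wg_verschiebung_succ, DK.wg_verschiebung_succ, DK.wg_one, DK.wg_one]
  -- conclude
  exact DK.surj_of_shift φB hφB hu n (fun X => DK.EB φB hroot hΘ (n + 1) 1 X)
end

section
/- Let A be a ring complete with respect to a nonarchimedean submultiplicative seminorm |·|. Then W_{p^n}(A) is complete with respect to the seminorm |x|_W = sup_{0≤j≤n} |x_{p^j}|^{1/p^j}. -/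
open WittVector

/-- The Gauss norm `|x|_W = max_{0 ≤ j ≤ n} |x_{pʲ}|^{1/pʲ}` on `W_{pⁿ}(A)`. -/
noncomputable def truncWittNorm (p : ℕ) [Fact p.Prime] {A : Type*} [CommRing A]
    (f : A → ℝ) (n : ℕ) (x : TruncatedWittVector p (n + 1) A) : ℝ :=
  ⨆ j : Fin (n + 1), f (x.coeff j) ^ ((1 : ℝ) / (p : ℝ) ^ (j : ℕ))

section Aux

open MvPolynomial

lemma stmt17.polyEst {A : Type*} [CommRing A] (f : A → ℝ)
    (hf0 : f 0 = 0) (hnonneg : ∀ x : A, 0 ≤ f x)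
    (hadd : ∀ x y : A, f (x + y) ≤ max (f x) (f y))
    (hmul : ∀ x y : A, f (x * y) ≤ f x * f y)
    {σ : Type*} (B : ℝ) (hB : 0 ≤ B) (φ : MvPolynomial σ ℤ) :
    ∃ C : ℝ, 0 ≤ C ∧ ∀ (δ : ℝ), 0 ≤ δ → ∀ g h : σ → A,
      (∀ i, f (g i) ≤ B) → (∀ i, f (h i) ≤ B) → (∀ i, f (g i - h i) ≤ δ) →
      f (aeval g φ) ≤ C ∧ f (aeval h φ) ≤ C ∧
      f (aeval g φ - aeval h φ) ≤ C * δ := by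
  induction φ using MvPolynomial.induction_on with
  | C a =>
    refine ⟨f (algebraMap ℤ A a), hnonneg _, fun δ hδ g h hg hh hgh => ?_⟩
    simp only [aeval_C, sub_self, hf0]
    exact ⟨le_rfl, le_rfl, mul_nonneg (hnonneg _) hδ⟩
  | add φ ψ ihφ ihψ =>
    obtain ⟨C₁, hC₁, h₁⟩ := ihφ
    obtain ⟨C₂, hC₂, h₂⟩ := ihψ
    refine ⟨C₁ + C₂, by positivity, fun δ hδ g h hg hh hgh => ?_⟩
    obtain ⟨hg1, hh1, hd1⟩ := h₁ δ hδ g h hg hh hgh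
    obtain ⟨hg2, hh2, hd2⟩ := h₂ δ hδ g h hg hh hgh
    simp only [map_add]
    refine ⟨(hadd _ _).trans ?_, (hadd _ _).trans ?_, ?_⟩
    · exact max_le (hg1.trans (by linarith)) (hg2.trans (by linarith))
    · exact max_le (hh1.trans (by linarith)) (hh2.trans (by linarith))
    · have : aeval g φ + aeval g ψ - (aeval h φ + aeval h ψ)
          = (aeval g φ - aeval h φ) + (aeval g ψ - aeval h ψ) := by ring
      rw [this]
      refine (hadd _ _).trans (max_le ?_ ?_)
      · exact hd1.trans (by nlinarith)
      · exact hd2.trans (by nlinarith)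
  | mul_X φ i ih =>
    obtain ⟨C, hC, hCp⟩ := ih
    refine ⟨C * B + C, by positivity, fun δ hδ g h hg hh hgh => ?_⟩
    obtain ⟨hg1, hh1, hd1⟩ := hCp δ hδ g h hg hh hgh
    simp only [map_mul, aeval_X]
    refine ⟨?_, ?_, ?_⟩
    · refine (hmul _ _).trans (((mul_le_mul hg1 (hg i) (hnonneg _) hC)).trans ?_)
      linarith
    · refine (hmul _ _).trans (((mul_le_mul hh1 (hh i) (hnonneg _) hC)).trans ?_)
      linarith
    · have heq : aeval g φ * g i - aeval h φ * h i
          = (aeval g φ - aeval h φ) * g i + aeval h φ * (g i - h i) := by ring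
      rw [heq]
      refine (hadd _ _).trans (max_le ?_ ?_)
      · refine (hmul _ _).trans ((mul_le_mul hd1 (hg i) (hnonneg _) (by positivity)).trans ?_)
        nlinarith
      · refine (hmul _ _).trans ((mul_le_mul hh1 (hgh i) (hnonneg _) hC).trans ?_)
        nlinarith [mul_nonneg (mul_nonneg hC hB) hδ]

variable (p : ℕ) [Fact p.Prime] {A : Type*} [CommRing A] {n : ℕ}

lemma stmt17.hp1 : (1 : ℝ) ≤ (p : ℝ) := by
  exact_mod_cast (Fact.out : p.Prime).one_lt.le

lemma stmt17.coeff_lt_of_norm_lt (f : A → ℝ) (hnonneg : ∀ x : A, 0 ≤ f x)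
    {ε : ℝ} (hε : 0 < ε) (hε1 : ε ≤ 1)
    (x : TruncatedWittVector p (n + 1) A) (h : truncWittNorm p f n x < ε)
    (j : Fin (n + 1)) : f (x.coeff j) < ε := by
  have hpj : (0 : ℝ) < (p : ℝ) ^ (j : ℕ) := pow_pos (by linarith [stmt17.hp1 p]) _
  have hterm : f (x.coeff j) ^ ((1 : ℝ) / (p : ℝ) ^ (j : ℕ)) < ε := by
    refine lt_of_le_of_lt ?_ h
    exact le_ciSup (Finite.bddAbove_range
      (fun j : Fin (n + 1) => f (x.coeff j) ^ ((1 : ℝ) / (p : ℝ) ^ (j : ℕ)))) j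
  have key : (f (x.coeff j) ^ ((1 : ℝ) / (p : ℝ) ^ (j : ℕ))) ^ ((p : ℝ) ^ (j : ℕ))
      < ε ^ ((p : ℝ) ^ (j : ℕ)) :=
    Real.rpow_lt_rpow (Real.rpow_nonneg (hnonneg _) _) hterm hpj
  rw [← Real.rpow_mul (hnonneg _), one_div, inv_mul_cancel₀ hpj.ne', Real.rpow_one] at key
  have h1t : (1 : ℝ) ≤ (p : ℝ) ^ (j : ℕ) := one_le_pow₀ (stmt17.hp1 p)
  exact key.trans_le ((Real.rpow_le_rpow_of_exponent_ge hε hε1 h1t).trans_eq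
    (Real.rpow_one ε))

lemma stmt17.norm_lt_of_coeff_lt (f : A → ℝ) (hnonneg : ∀ x : A, 0 ≤ f x)
    {ε : ℝ} (hε : 0 < ε) (hε1 : ε ≤ 1)
    (x : TruncatedWittVector p (n + 1) A)
    (h : ∀ j : Fin (n + 1), f (x.coeff j) < ε ^ ((p : ℝ) ^ n)) :
    truncWittNorm p f n x < ε := by
  have hp0 : (0 : ℝ) < (p : ℝ) := by linarith [stmt17.hp1 p]
  have hbig : ∀ j : Fin (n + 1),
      f (x.coeff j) ^ ((1 : ℝ) / (p : ℝ) ^ (j : ℕ)) < ε := by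
    intro j
    have hpj : (0 : ℝ) < (p : ℝ) ^ (j : ℕ) := pow_pos hp0 _
    have h1 : f (x.coeff j) ^ ((1 : ℝ) / (p : ℝ) ^ (j : ℕ))
        < (ε ^ ((p : ℝ) ^ n)) ^ ((1 : ℝ) / (p : ℝ) ^ (j : ℕ)) :=
      Real.rpow_lt_rpow (hnonneg _) (h j) (by positivity)
    refine h1.trans_le ?_
    rw [← Real.rpow_mul hε.le]
    calc ε ^ ((p : ℝ) ^ n * ((1 : ℝ) / (p : ℝ) ^ (j : ℕ)))
        ≤ ε ^ (1 : ℝ) := by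
          refine Real.rpow_le_rpow_of_exponent_ge hε hε1 ?_
          rw [mul_one_div, le_div_iff₀ hpj, one_mul]
          exact pow_le_pow_right₀ (stmt17.hp1 p) (Nat.le_of_lt_succ j.isLt)
      _ = ε := Real.rpow_one ε
  obtain ⟨j₀, hj₀⟩ := Finite.exists_max
    (fun j : Fin (n + 1) => f (x.coeff j) ^ ((1 : ℝ) / (p : ℝ) ^ (j : ℕ)))
  exact lt_of_le_of_lt (ciSup_le hj₀) (hbig j₀)

variable {p}

lemma stmt17.uncurryOne {A : Type*} (P : A → Prop) (c1 c2 : ℕ → A)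
    (h1 : ∀ i, P (c1 i)) (h2 : ∀ i, P (c2 i)) :
    ∀ i : Fin 2 × ℕ, P (Function.uncurry ![c1, c2] i) := by
  rintro ⟨c, i⟩
  fin_cases c
  · simpa [Function.uncurry] using h1 i
  · simpa [Function.uncurry] using h2 i

lemma stmt17.uncurryPair {A : Type*} (Q : A → A → Prop) (c1 c2 d1 d2 : ℕ → A)
    (h1 : ∀ i, Q (c1 i) (d1 i)) (h2 : ∀ i, Q (c2 i) (d2 i)) :
    ∀ i : Fin 2 × ℕ, Q (Function.uncurry ![c1, c2] i) (Function.uncurry ![d1, d2] i) := by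
  rintro ⟨c, i⟩
  fin_cases c
  · simpa [Function.uncurry] using h1 i
  · simpa [Function.uncurry] using h2 i

omit [Fact p.Prime] in
lemma stmt17.out_coeff (x : TruncatedWittVector p (n + 1) A) (i : ℕ) :
    x.out.coeff i = if h : i < n + 1 then x.coeff ⟨i, h⟩ else 0 :=
  rfl

lemma stmt17.truncate_out' (x : TruncatedWittVector p (n + 1) A) :
    WittVector.truncate (n + 1) x.out = x :=
  x.truncateFun_out

lemma stmt17.coeff_of_truncate {w : WittVector p A} {x : TruncatedWittVector p (n + 1) A}
    (h : WittVector.truncate (n + 1) w = x) (j : Fin (n + 1)) :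
    w.coeff j = x.coeff j := by
  rw [← h, WittVector.coeff_truncate]

lemma stmt17.add_coeff' (u v : WittVector p A) (j : ℕ) :
    (u + v).coeff j = aeval (Function.uncurry ![u.coeff, v.coeff]) (wittAdd p j) :=
  WittVector.add_coeff u v j

lemma stmt17.sub_coeff' (u v : WittVector p A) (j : ℕ) :
    (u - v).coeff j = aeval (Function.uncurry ![u.coeff, v.coeff]) (wittSub p j) :=
  WittVector.sub_coeff u v j

lemma stmt17.coordDiffEst (f : A → ℝ)
    (hf0 : f 0 = 0) (hnonneg : ∀ x : A, 0 ≤ f x)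
    (hadd : ∀ x y : A, f (x + y) ≤ max (f x) (f y))
    (hmul : ∀ x y : A, f (x * y) ≤ f x * f y)
    (Bv : ℝ) (hBv : 0 ≤ Bv) (j : Fin (n + 1)) :
    ∃ C : ℝ, 0 ≤ C ∧ ∀ (x y : TruncatedWittVector p (n + 1) A) (δ : ℝ),
      0 ≤ δ → δ ≤ Bv →
      (∀ i : Fin (n + 1), f ((x - y).coeff i) ≤ δ) →
      (∀ i : Fin (n + 1), f (y.coeff i) ≤ Bv) →
      f (x.coeff j - y.coeff j) ≤ C * δ := by
  obtain ⟨C, hC0, hC⟩ := stmt17.polyEst f hf0 hnonneg hadd hmul Bv hBv (wittAdd p (j : ℕ))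
  refine ⟨C, hC0, fun x y δ hδ hδB hx hy => ?_⟩
  set d : WittVector p A := (x - y).out with hd
  set w : WittVector p A := y.out with hw
  have hdb : ∀ i : ℕ, f (d.coeff i) ≤ δ := by
    intro i
    rw [hd, stmt17.out_coeff]
    split
    · exact hx _
    · rw [hf0]; exact hδ
  have hwb : ∀ i : ℕ, f (w.coeff i) ≤ Bv := by
    intro i
    rw [hw, stmt17.out_coeff]
    split
    · exact hy _
    · rw [hf0]; exact hBv
  have hzb : ∀ i : ℕ, f ((0 : WittVector p A).coeff i) ≤ Bv := by
    intro i; rw [WittVector.zero_coeff, hf0]; exact hBv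
  obtain ⟨-, -, hdiff⟩ := hC δ hδ
    (Function.uncurry ![d.coeff, w.coeff])
    (Function.uncurry ![(0 : WittVector p A).coeff, w.coeff])
    (stmt17.uncurryOne (fun u => f u ≤ Bv) _ _ (fun i => (hdb i).trans hδB) hwb)
    (stmt17.uncurryOne (fun u => f u ≤ Bv) _ _ hzb hwb)
    (stmt17.uncurryPair (fun u v => f (u - v) ≤ δ) _ _ _ _
      (fun i => by simpa [WittVector.zero_coeff] using hdb i)
      (fun i => by simpa [hf0] using hδ))
  have e1 : (d + w).coeff (j : ℕ) = x.coeff j := by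
    refine stmt17.coeff_of_truncate ?_ j
    rw [map_add, hd, hw, stmt17.truncate_out', stmt17.truncate_out', sub_add_cancel]
  have e0 : ((0 : WittVector p A) + w).coeff (j : ℕ) = y.coeff j := by
    rw [zero_add, hw]
    exact stmt17.coeff_of_truncate (stmt17.truncate_out' y) j
  rw [← e1, ← e0, stmt17.add_coeff', stmt17.add_coeff']
  exact hdiff

lemma stmt17.subLimEst (f : A → ℝ)
    (hf0 : f 0 = 0) (hnonneg : ∀ x : A, 0 ≤ f x)
    (hadd : ∀ x y : A, f (x + y) ≤ max (f x) (f y))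
    (hmul : ∀ x y : A, f (x * y) ≤ f x * f y)
    (Bv : ℝ) (hBv : 0 ≤ Bv) (j : Fin (n + 1)) :
    ∃ C : ℝ, 0 ≤ C ∧ ∀ (x a : TruncatedWittVector p (n + 1) A) (δ : ℝ),
      0 ≤ δ →
      (∀ i : Fin (n + 1), f (a.coeff i - x.coeff i) ≤ δ) →
      (∀ i : Fin (n + 1), f (x.coeff i) ≤ Bv) →
      (∀ i : Fin (n + 1), f (a.coeff i) ≤ Bv) →
      f ((x - a).coeff j) ≤ C * δ := by
  obtain ⟨C, hC0, hC⟩ := stmt17.polyEst f hf0 hnonneg hadd hmul Bv hBv (wittSub p (j : ℕ))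
  refine ⟨C, hC0, fun x a δ hδ hdiff hx ha => ?_⟩
  set u : WittVector p A := x.out with hu
  set v : WittVector p A := a.out with hv
  have hub : ∀ i : ℕ, f (u.coeff i) ≤ Bv := by
    intro i; rw [hu, stmt17.out_coeff]; split
    · exact hx _
    · rw [hf0]; exact hBv
  have hvb : ∀ i : ℕ, f (v.coeff i) ≤ Bv := by
    intro i; rw [hv, stmt17.out_coeff]; split
    · exact ha _
    · rw [hf0]; exact hBv
  have hdb : ∀ i : ℕ, f (v.coeff i - u.coeff i) ≤ δ := by
    intro i; rw [hu, hv, stmt17.out_coeff, stmt17.out_coeff]; split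
    · exact hdiff _
    · simpa [hf0] using hδ
  obtain ⟨-, -, hkey⟩ := hC δ hδ
    (Function.uncurry ![u.coeff, v.coeff])
    (Function.uncurry ![u.coeff, u.coeff])
    (stmt17.uncurryOne (fun z => f z ≤ Bv) _ _ hub hvb)
    (stmt17.uncurryOne (fun z => f z ≤ Bv) _ _ hub hub)
    (stmt17.uncurryPair (fun z w => f (z - w) ≤ δ) _ _ _ _
      (fun i => by simpa [hf0] using hδ) hdb)
  have e1 : (u - v).coeff (j : ℕ) = (x - a).coeff j := by
    refine stmt17.coeff_of_truncate ?_ j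
    rw [map_sub, hu, hv, stmt17.truncate_out', stmt17.truncate_out']
  have e0 : (u - u).coeff (j : ℕ) = 0 := by
    rw [sub_self, WittVector.zero_coeff]
  calc f ((x - a).coeff j)
      = f (aeval (Function.uncurry ![u.coeff, v.coeff]) (wittSub p (j : ℕ))
          - aeval (Function.uncurry ![u.coeff, u.coeff]) (wittSub p (j : ℕ))) := by
        rw [← stmt17.sub_coeff', ← stmt17.sub_coeff', e1, e0, sub_zero]
    _ ≤ C * δ := hkey

end Aux

/-- If `A` is complete with respect to a nonarchimedean submultiplicative seminorm `f`
(every Cauchy sequence converges), then `W_{pⁿ}(A)` is complete with respect to `|·|_W`. -/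
theorem stmt17 (p : ℕ) [Fact p.Prime] (A : Type*) [CommRing A] (f : A → ℝ)
    (hf0 : f 0 = 0) (hnonneg : ∀ x : A, 0 ≤ f x)
    (hadd : ∀ x y : A, f (x + y) ≤ max (f x) (f y))
    (hmul : ∀ x y : A, f (x * y) ≤ f x * f y)
    (hcomplete : ∀ s : ℕ → A,
      (∀ ε : ℝ, 0 < ε → ∃ N : ℕ, ∀ m k : ℕ, N ≤ m → N ≤ k → f (s m - s k) < ε) →
      ∃ a : A, ∀ ε : ℝ, 0 < ε → ∃ N : ℕ, ∀ m : ℕ, N ≤ m → f (s m - a) < ε)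
    (n : ℕ) :
    ∀ s : ℕ → TruncatedWittVector p (n + 1) A,
      (∀ ε : ℝ, 0 < ε → ∃ N : ℕ, ∀ m k : ℕ, N ≤ m → N ≤ k →
        truncWittNorm p f n (s m - s k) < ε) →
      ∃ a : TruncatedWittVector p (n + 1) A, ∀ ε : ℝ, 0 < ε →
        ∃ N : ℕ, ∀ m : ℕ, N ≤ m → truncWittNorm p f n (s m - a) < ε := by
  intro s hs
  have hfle : ∀ a b : A, f a ≤ max (f (a - b)) (f b) := by
    intro a b
    simpa [sub_add_cancel] using hadd (a - b) b
  have hneg : ∀ a : A, f (-a) ≤ f (-1 : A) * f a := by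
    intro a
    simpa [neg_one_mul] using hmul (-1 : A) a
  -- Cauchy for coefficients of differences
  have Hc : ∀ δ : ℝ, 0 < δ → ∃ N, ∀ m k, N ≤ m → N ≤ k → ∀ j : Fin (n + 1),
      f ((s m - s k).coeff j) < δ := by
    intro δ hδ
    obtain ⟨N, hN⟩ := hs (min δ 1) (lt_min hδ one_pos)
    refine ⟨N, fun m k hm hk j => ?_⟩
    exact lt_of_lt_of_le (stmt17.coeff_lt_of_norm_lt p f hnonneg (lt_min hδ one_pos)
      (min_le_right δ 1) _ (hN m k hm hk) j) (min_le_left δ 1)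
  obtain ⟨N₁, hN₁⟩ := Hc 1 one_pos
  -- bound on the coefficients of s N₁
  obtain ⟨j₀, hj₀⟩ := Finite.exists_max fun j : Fin (n + 1) => f ((s N₁).coeff j)
  set B₀ : ℝ := max 1 (f ((s N₁).coeff j₀)) with hB₀def
  have hB₀1 : (1 : ℝ) ≤ B₀ := le_max_left _ _
  have hB₀cf : ∀ j : Fin (n + 1), f ((s N₁).coeff j) ≤ B₀ :=
    fun j => (hj₀ j).trans (le_max_right _ _)
  have hB₀0 : (0 : ℝ) ≤ B₀ := by linarith
  -- constants for the first estimate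
  choose C₁ hC₁0 hC₁ using fun j : Fin (n + 1) =>
    stmt17.coordDiffEst (p := p) f hf0 hnonneg hadd hmul B₀ hB₀0 j
  obtain ⟨j₁, hj₁⟩ := Finite.exists_max C₁
  set B : ℝ := max B₀ (C₁ j₁) with hBdef
  have hB1 : (1 : ℝ) ≤ B := hB₀1.trans (le_max_left _ _)
  have hB0 : (0 : ℝ) ≤ B := by linarith
  have hBge : ∀ j, C₁ j ≤ B := fun j => (hj₁ j).trans (le_max_right _ _)
  -- all coefficients of s m are bounded by B for m ≥ N₁
  have hsb : ∀ m, N₁ ≤ m → ∀ j : Fin (n + 1), f ((s m).coeff j) ≤ B := by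
    intro m hm j
    have h1 : f ((s m).coeff j - (s N₁).coeff j) ≤ C₁ j * 1 :=
      hC₁ j (s m) (s N₁) 1 zero_le_one hB₀1
        (fun i => (hN₁ m N₁ hm le_rfl i).le) hB₀cf
    calc f ((s m).coeff j)
        ≤ max (f ((s m).coeff j - (s N₁).coeff j)) (f ((s N₁).coeff j)) := hfle _ _
      _ ≤ B := by
          refine max_le (h1.trans ?_) ((hB₀cf j).trans (le_max_left _ _))
          rw [mul_one]; exact hBge j
  -- the big bound, including the seminorm of -1
  set B' : ℝ := max B (f (-1 : A)) with hB'def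
  have hB'B : B ≤ B' := le_max_left _ _
  have hB'1 : (1 : ℝ) ≤ B' := hB1.trans hB'B
  have hB'0 : (0 : ℝ) ≤ B' := by linarith
  -- constants for the Cauchy estimate and the limit estimate
  choose C₂ hC₂0 hC₂ using fun j : Fin (n + 1) =>
    stmt17.coordDiffEst (p := p) f hf0 hnonneg hadd hmul B' hB'0 j
  choose C₃ hC₃0 hC₃ using fun j : Fin (n + 1) =>
    stmt17.subLimEst (p := p) f hf0 hnonneg hadd hmul B' hB'0 j
  obtain ⟨j₂, hj₂⟩ := Finite.exists_max C₂
  obtain ⟨j₃, hj₃⟩ := Finite.exists_max C₃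
  set D : ℝ := max 1 (max (C₂ j₂) (C₃ j₃)) with hDdef
  have hD1 : (1 : ℝ) ≤ D := le_max_left _ _
  have hD0 : (0 : ℝ) < D := by linarith
  have hDC₂ : ∀ j, C₂ j ≤ D := fun j =>
    (hj₂ j).trans ((le_max_left _ _).trans (le_max_right _ _))
  have hDC₃ : ∀ j, C₃ j ≤ D := fun j =>
    (hj₃ j).trans ((le_max_right _ _).trans (le_max_right _ _))
  -- the coefficient sequences are Cauchy
  have Hcc : ∀ δ : ℝ, 0 < δ → ∃ N, ∀ m k, N ≤ m → N ≤ k → ∀ j : Fin (n + 1),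
      f ((s m).coeff j - (s k).coeff j) < δ := by
    intro δ hδ
    have hδ' : (0 : ℝ) < min (δ / (2 * D)) 1 := lt_min (by positivity) one_pos
    obtain ⟨N₂, hN₂⟩ := Hc (min (δ / (2 * D)) 1) hδ'
    refine ⟨max N₁ N₂, fun m k hm hk j => ?_⟩
    have h1 : f ((s m).coeff j - (s k).coeff j) ≤ C₂ j * min (δ / (2 * D)) 1 :=
      hC₂ j (s m) (s k) _ hδ'.le ((min_le_right _ _).trans hB'1)
        (fun i => (hN₂ m k (le_trans (le_max_right _ _) hm)
          (le_trans (le_max_right _ _) hk) i).le)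
        (fun i => (hsb k (le_trans (le_max_left _ _) hk) i).trans hB'B)
    have h2 : C₂ j * min (δ / (2 * D)) 1 ≤ D * (δ / (2 * D)) :=
      mul_le_mul (hDC₂ j) (min_le_left _ _) hδ'.le hD0.le
    have h3 : D * (δ / (2 * D)) = δ / 2 := by
      field_simp
    linarith
  -- limits of the coefficient sequences
  have hlim : ∀ j : Fin (n + 1), ∃ a : A, ∀ ε : ℝ, 0 < ε →
      ∃ N, ∀ m, N ≤ m → f ((s m).coeff j - a) < ε := by
    intro j
    refine hcomplete (fun m => (s m).coeff j) (fun ε hε => ?_)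
    obtain ⟨N, hN⟩ := Hcc ε hε
    exact ⟨N, fun m k hm hk => hN m k hm hk j⟩
  choose a ha using hlim
  set aW : TruncatedWittVector p (n + 1) A := TruncatedWittVector.mk p a with haW
  have haWc : ∀ j : Fin (n + 1), aW.coeff j = a j := fun j =>
    TruncatedWittVector.coeff_mk a j
  -- the limit coefficients are bounded by B'
  have haB : ∀ j : Fin (n + 1), f (a j) ≤ B' := by
    intro j
    obtain ⟨N, hN⟩ := ha j 1 one_pos
    set m := max N N₁ with hm
    have h1 : f (a j - (s m).coeff j) ≤ f (-1 : A) * 1 := by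
      have : a j - (s m).coeff j = -((s m).coeff j - a j) := by ring
      rw [this]
      exact (hneg _).trans (mul_le_mul_of_nonneg_left
        (hN m (le_max_left _ _)).le (hnonneg _))
    calc f (a j) ≤ max (f (a j - (s m).coeff j)) (f ((s m).coeff j)) := hfle _ _
      _ ≤ B' := by
          refine max_le (h1.trans ?_) ((hsb m (le_max_right _ _) j).trans hB'B)
          rw [mul_one]; exact le_max_right _ _
  -- the main statement
  refine ⟨aW, fun ε hε => ?_⟩
  set ε' : ℝ := min ε 1 with hε'def
  have hε'0 : (0 : ℝ) < ε' := lt_min hε one_pos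
  have hε'1 : ε' ≤ 1 := min_le_right _ _
  set τ : ℝ := ε' ^ ((p : ℝ) ^ n) with hτdef
  have hτ0 : (0 : ℝ) < τ := Real.rpow_pos_of_pos hε'0 _
  set M : ℝ := f (-1 : A) + 1 with hMdef
  have hM0 : (0 : ℝ) < M := by have := hnonneg (-1 : A); linarith
  set δ'' : ℝ := τ / (2 * D * M) with hδ''def
  have hδ''0 : (0 : ℝ) < δ'' := by positivity
  choose N₃ hN₃ using fun j : Fin (n + 1) => ha j δ'' hδ''0
  set N : ℕ := max N₁ (Finset.univ.sup N₃) with hNdef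
  refine ⟨N, fun m hm => ?_⟩
  have hmN₁ : N₁ ≤ m := le_trans (le_max_left _ _) hm
  have hsmall : ∀ i : Fin (n + 1), f (aW.coeff i - (s m).coeff i) ≤ f (-1 : A) * δ'' := by
    intro i
    have h1 : f ((s m).coeff i - a i) < δ'' :=
      hN₃ i m (le_trans (le_trans (Finset.le_sup (Finset.mem_univ i))
        (le_max_right _ _)) hm)
    have h2 : aW.coeff i - (s m).coeff i = -((s m).coeff i - a i) := by
      rw [haWc]; ring
    rw [h2]
    exact (hneg _).trans (mul_le_mul_of_nonneg_left h1.le (hnonneg _))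
  have hkey : ∀ j : Fin (n + 1), f ((s m - aW).coeff j) < τ := by
    intro j
    have h1 : f ((s m - aW).coeff j) ≤ C₃ j * (f (-1 : A) * δ'') :=
      hC₃ j (s m) aW _ (mul_nonneg (hnonneg _) hδ''0.le) hsmall
        (fun i => (hsb m hmN₁ i).trans hB'B)
        (fun i => by rw [haWc]; exact haB i)
    have e1 : f (-1 : A) * δ'' ≤ M * δ'' :=
      mul_le_mul_of_nonneg_right (by rw [hMdef]; linarith) hδ''0.le
    have e2 : C₃ j * (f (-1 : A) * δ'') ≤ D * (M * δ'') :=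
      mul_le_mul (hDC₃ j) e1 (mul_nonneg (hnonneg _) hδ''0.le) hD0.le
    have e3 : D * (M * δ'') = τ / 2 := by
      rw [hδ''def]
      field_simp
    exact lt_of_le_of_lt (h1.trans e2) (by rw [e3]; linarith)
  have : truncWittNorm p f n (s m - aW) < ε' :=
    stmt17.norm_lt_of_coeff_lt p f hnonneg hε'0 hε'1 _ hkey
  exact this.trans_le (min_le_left _ _)
end

section
/- In the ring of p-typical Witt vectors W(ℤ), write p^m = (z₀, z₁, z₂, …) for a nonnegative integer m. Then z₀ = p^m, z_i ∈ p^{m-i}·ℤ for i = 1, …, m−1, and z_m ≡ 1 (mod p). -/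
open WittVector

private lemma ghost_key (p : ℕ) [Fact p.Prime] (m n : ℕ) :
    ∑ i ∈ Finset.range (n + 1),
      (p : ℤ) ^ i * (((p : WittVector p ℤ) ^ m).coeff i) ^ p ^ (n - i) = (p : ℤ) ^ m := by
  have h : ghostComponent n ((p : WittVector p ℤ) ^ m) = (p : ℤ) ^ m := by
    rw [map_pow, map_natCast]
  rwa [ghostComponent_apply, aeval_wittPolynomial] at h

private lemma coeff_zero (p : ℕ) [Fact p.Prime] (m : ℕ) :
    ((p : WittVector p ℤ) ^ m).coeff 0 = (p : ℤ) ^ m := by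
  have h := ghost_key p m 0
  simp at h
  exact h

private lemma divA (p : ℕ) [Fact p.Prime] (m : ℕ) :
    ∀ n, 1 ≤ n → n ≤ m → (p : ℤ) ^ m ∣ (p : ℤ) ^ n * ((p : WittVector p ℤ) ^ m).coeff n := by
  intro n
  induction n using Nat.strong_induction_on with
  | _ n IH =>
    intro h1 hm
    set a : ℕ → ℤ := fun i => ((p : WittVector p ℤ) ^ m).coeff i with ha
    have key := ghost_key p m n
    rw [Finset.sum_range_succ, Nat.sub_self, pow_zero, pow_one] at key
    have : (p : ℤ) ^ n * a n = (p : ℤ) ^ m -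
        ∑ i ∈ Finset.range n, (p : ℤ) ^ i * a i ^ p ^ (n - i) := by
      linarith [key]
    rw [this]
    apply dvd_sub dvd_rfl
    apply Finset.dvd_sum
    intro i hi
    rw [Finset.mem_range] at hi
    rcases Nat.eq_zero_or_pos i with hi0 | hi1
    · subst hi0
      have : a 0 = (p : ℤ) ^ m := coeff_zero p m
      rw [this, ← pow_mul]
      simp only [pow_zero, one_mul]
      exact pow_dvd_pow _ (Nat.le_mul_of_pos_right m (Nat.pow_pos (Fact.out : p.Prime).pos))
    · have hd : (p : ℤ) ^ m ∣ (p : ℤ) ^ i * a i := IH i hi hi1 (le_trans (le_of_lt hi) hm)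
      have hk : 1 ≤ p ^ (n - i) := Nat.one_le_pow _ _ (Fact.out : p.Prime).pos
      calc (p : ℤ) ^ m ∣ ((p : ℤ) ^ i * a i) * a i ^ (p ^ (n - i) - 1) := hd.mul_right _
        _ = (p : ℤ) ^ i * a i ^ p ^ (n - i) := by
            rw [mul_assoc, ← pow_succ']
            congr 2
            omega

private lemma divB (p : ℕ) [Fact p.Prime] (m : ℕ) :
    ∀ n, n ≤ m → (p : ℤ) ^ (m - n) ∣ ((p : WittVector p ℤ) ^ m).coeff n := by
  intro n hn
  rcases Nat.eq_zero_or_pos n with h0 | h1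
  · subst h0; rw [coeff_zero]; exact pow_dvd_pow (p : ℤ) (by omega)
  · have hd := divA p m n h1 hn
    have : (p : ℤ) ^ n * (p : ℤ) ^ (m - n) ∣ (p : ℤ) ^ n * ((p : WittVector p ℤ) ^ m).coeff n := by
      rwa [← pow_add, Nat.add_sub_cancel' hn]
    exact (mul_dvd_mul_iff_left (pow_ne_zero n
      (Nat.cast_ne_zero.mpr (Fact.out : p.Prime).ne_zero) : (p : ℤ) ^ n ≠ 0)).mp this

/-- Writing `p^m = (z₀, z₁, z₂, …)` in the `p`-typical Witt vectors `W(ℤ)`, one has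
`z₀ = p^m`, `p^{m-i} ∣ z_i` for `i = 1, …, m-1`, and `z_m ≡ 1 (mod p)`. -/
theorem stmt19 (p : ℕ) [Fact p.Prime] (m : ℕ) :
    ((p : WittVector p ℤ) ^ m).coeff 0 = (p : ℤ) ^ m ∧
    (∀ i : ℕ, 1 ≤ i → i ≤ m - 1 →
      (p : ℤ) ^ (m - i) ∣ ((p : WittVector p ℤ) ^ m).coeff i) ∧
    (p : ℤ) ∣ ((p : WittVector p ℤ) ^ m).coeff m - 1 := by
  refine ⟨coeff_zero p m, fun i h1 h2 => divB p m i (by omega), ?_⟩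
  rcases Nat.eq_zero_or_pos m with hm0 | hm1
  · subst hm0
    rw [coeff_zero]
    simp
  -- last coefficient
  have key := ghost_key p m m
  rw [Finset.sum_range_succ, Nat.sub_self, pow_zero, pow_one] at key
  have hS : (p : ℤ) ^ (m + 1) ∣ ∑ i ∈ Finset.range m,
      (p : ℤ) ^ i * (((p : WittVector p ℤ) ^ m).coeff i) ^ p ^ (m - i) := by
    apply Finset.dvd_sum
    intro i hi
    rw [Finset.mem_range] at hi
    obtain ⟨c, hc⟩ := divB p m i (le_of_lt hi)
    have hk : 2 ≤ p ^ (m - i) := by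
      calc 2 ≤ p := (Fact.out : p.Prime).two_le
        _ = p ^ 1 := (pow_one p).symm
        _ ≤ p ^ (m - i) := Nat.pow_le_pow_right (Fact.out : p.Prime).pos (by omega)
    have heq : (p : ℤ) ^ i * (((p : WittVector p ℤ) ^ m).coeff i) ^ p ^ (m - i) =
        (p : ℤ) ^ (i + (m - i) * p ^ (m - i)) * c ^ p ^ (m - i) := by
      rw [hc, mul_pow, ← pow_mul, pow_add, mul_assoc]
    rw [heq]
    refine Dvd.dvd.mul_right (pow_dvd_pow _ ?_) _
    have h2 : 2 * (m - i) ≤ (m - i) * p ^ (m - i) := by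
      calc 2 * (m - i) ≤ p ^ (m - i) * (m - i) := Nat.mul_le_mul_right _ hk
        _ = (m - i) * p ^ (m - i) := mul_comm _ _
    set q := (m - i) * p ^ (m - i) with hq
    omega
  have hmain : (p : ℤ) ^ (m + 1) ∣ (p : ℤ) ^ m * (((p : WittVector p ℤ) ^ m).coeff m - 1) := by
    have heq : (p : ℤ) ^ m * (((p : WittVector p ℤ) ^ m).coeff m - 1) =
        -(∑ i ∈ Finset.range m,
          (p : ℤ) ^ i * (((p : WittVector p ℤ) ^ m).coeff i) ^ p ^ (m - i)) := by
      rw [mul_sub, mul_one]; linarith [key]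
    rw [heq]
    exact hS.neg_right
  rw [pow_succ] at hmain
  exact (mul_dvd_mul_iff_left (pow_ne_zero m
    (Nat.cast_ne_zero.mpr (Fact.out : p.Prime).ne_zero) : (p : ℤ) ^ m ≠ 0)).mp hmain
end
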